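/- arXiv:1509.01301 — 4 statements merged into one kernel-verified Lean document; each statement's English description precedes it below -/
import Mathlib

section
/- Let P be a consentaneous partially oriented graph whose underlying graph is a proper interval graph. Then P can be completed to an acyclic local tournament if and only if P contains no directed cycle. -/
/-- An oriented graph: an asymmetric (hence irreflexive) arc relation. -/
def IsOrientedGraph {V : Type*} (A : V → V → Prop) : Prop :=
  ∀ u v : V, A u v → ¬ A v u

/-- A tournament: an oriented graph with an arc between any two distinct vertices. -/
def IsTournament {V : Type*} (A : V → V → Prop) : Prop :=
  IsOrientedGraph A ∧ ∀ u v : V, u ≠ v → A u v ∨ A v u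

/-- A local tournament: every out-neighbourhood and every in-neighbourhood
induces a tournament. -/
def IsLocalTournament {V : Type*} (A : V → V → Prop) : Prop :=
  IsOrientedGraph A ∧
  (∀ v x y : V, A v x → A v y → x ≠ y → A x y ∨ A y x) ∧
  (∀ v x y : V, A x v → A y v → x ≠ y → A x y ∨ A y x)

/-- Local transitivity: the arc relation is transitive when restricted to the
out-neighbourhood of any vertex and to the in-neighbourhood of any vertex
(so these neighbourhoods induce transitive, i.e. triangle-free, subtournaments). -/
def IsLocallyTransitive {V : Type*} (A : V → V → Prop) : Prop :=
  (∀ v x y z : V, A v x → A v y → A v z → A x y → A y z → A x z) ∧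
  (∀ v x y z : V, A x v → A y v → A z v → A x y → A y z → A x z)

/-- A directed cycle of `A` all of whose vertices lie in `S`. -/
def HasCycleIn {V : Type*} (A : V → V → Prop) (S : Set V) : Prop :=
  ∃ (n : ℕ) (f : ZMod n → V), 2 ≤ n ∧ Function.Injective f ∧
    (∀ i, f i ∈ S) ∧ ∀ i : ZMod n, A (f i) (f (i + 1))

/-- A directed cycle somewhere in `A`. -/
def HasDirectedCycle {V : Type*} (A : V → V → Prop) : Prop :=
  HasCycleIn A Set.univ

/-- A partially oriented graph (pog): a symmetric loopless edge relation `E`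
together with an asymmetric arc relation `A`, no pair of vertices being joined
by both an edge and an arc. -/
def IsPog {V : Type*} (E A : V → V → Prop) : Prop :=
  (∀ u v : V, E u v → E v u) ∧ (∀ v : V, ¬ E v v) ∧ IsOrientedGraph A ∧
  (∀ u v : V, E u v → ¬ A u v ∧ ¬ A v u)

/-- `D` is a completion of the pog `(E, A)`: it keeps every arc of `A`,
orients every edge of `E` (in exactly one direction), and contains nothing else. -/
def IsCompletion {V : Type*} (E A D : V → V → Prop) : Prop :=
  IsOrientedGraph D ∧
  (∀ u v : V, A u v → D u v) ∧
  (∀ u v : V, E u v → D u v ∨ D v u) ∧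
  (∀ u v : V, D u v → A u v ∨ E u v)

/-- `T` is obtained from the oriented graph `A` by adding arcs between
non-adjacent pairs only (no arc of `A` is reversed), the result being a
tournament.  This is exactly a completion of the partially oriented complete
graph `A^c` to a tournament. -/
def CompletesToTournament {V : Type*} (A T : V → V → Prop) : Prop :=
  (∀ u v : V, A u v → T u v) ∧ (∀ u v : V, T u v → ¬ A v u) ∧ IsTournament T

/-- A round ordering of the arc relation `A`: a cyclic ordering (a bijection
from `ZMod n`) in which the out-neighbours of each vertex appear consecutively
immediately after it and its in-neighbours consecutively immediately before it. -/
def IsRoundOrdering {V : Type*} (A : V → V → Prop) {n : ℕ} (f : ZMod n → V) : Prop :=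
  Function.Bijective f ∧
  (∀ i j : ZMod n, A (f i) (f j) ↔ 1 ≤ (j - i).val ∧ (j - i).val ≤ {u | A (f i) u}.ncard) ∧
  (∀ i j : ZMod n, A (f j) (f i) ↔ 1 ≤ (i - j).val ∧ (i - j).val ≤ {u | A u (f i)}.ncard)

/-- The cyclic ordering given by `f : ZMod n → V` is excellent for the arc
relation `A`: there is no pair of arcs `(f i, f j)`, `(f s, f t)` whose vertices
occur in the cyclic order `f i, f t, f s, f j` (positions measured from `i`;
the degenerate cases `i = t` and `s = j` are allowed). -/
def IsExcellent {V : Type*} (A : V → V → Prop) {n : ℕ} (f : ZMod n → V) : Prop :=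
  ¬ ∃ i j s t : ZMod n, A (f i) (f j) ∧ A (f s) (f t) ∧
      (t - i).val ≤ (s - i).val ∧ (s - i).val ≤ (j - i).val

/-- The vertex set of the auxiliary graph `G⁺`: ordered pairs `(u,v)` with
`uv` an edge of `G`. -/
abbrev EdgePair {V : Type*} (G : SimpleGraph V) := {p : V × V // G.Adj p.1 p.2}

/-- The adjacency rule of the auxiliary graph `G⁺`. -/
def auxRel {V : Type*} (G : SimpleGraph V) (x y : EdgePair G) : Prop :=
  (x.1.1 = y.1.1 ∧ ¬ G.Adj x.1.2 y.1.2) ∨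
  (¬ G.Adj x.1.1 y.1.1 ∧ x.1.2 = y.1.2) ∨
  (x.1.1 = y.1.2 ∧ x.1.2 = y.1.1)

/-- The auxiliary graph `G⁺` of a graph `G`. -/
def auxGraph {V : Type*} (G : SimpleGraph V) : SimpleGraph (EdgePair G) :=
  SimpleGraph.fromRel (auxRel G)

/-- An orientation of a graph `G`: an asymmetric choice of exactly one
direction for each edge of `G`. -/
def IsOrientation {V : Type*} (G : SimpleGraph V) (D : V → V → Prop) : Prop :=
  (∀ u v : V, D u v → G.Adj u v) ∧ (∀ u v : V, D u v → ¬ D v u) ∧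
  (∀ u v : V, G.Adj u v → D u v ∨ D v u)

/-- The arcs `A` of a partial orientation of `G` are consentaneous: no two arcs
correspond to vertices of `G⁺` at odd distance, and for vertices of `G⁺` at even
distance (in the same component) either both corresponding arcs are present or
neither is. -/
def Consentaneous {V : Type*} (G : SimpleGraph V) (A : V → V → Prop) : Prop :=
  (¬ ∃ x y : EdgePair G, A x.1.1 x.1.2 ∧ A y.1.1 y.1.2 ∧ Odd ((auxGraph G).dist x y)) ∧
  (∀ x y : EdgePair G, (auxGraph G).Reachable x y → Even ((auxGraph G).dist x y) →
    (A x.1.1 x.1.2 ↔ A y.1.1 y.1.2))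

/-- The edge `uv` of the underlying graph is oriented in the partial orientation `A`. -/
def EdgeOriented {V : Type*} (A : V → V → Prop) (u v : V) : Prop := A u v ∨ A v u

/-- `P = (G, A)` has no bad triple: no triangle of `G` whose three edges lie in
three different connected components of `G⁺` and exactly two of whose edges are
oriented. -/
def NoBadTriple {V : Type*} (G : SimpleGraph V) (A : V → V → Prop) : Prop :=
  ¬ ∃ (x y z : V) (hxy : G.Adj x y) (hyz : G.Adj y z) (hzx : G.Adj z x),
    ¬ (auxGraph G).Reachable ⟨(x, y), hxy⟩ ⟨(y, z), hyz⟩ ∧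
    ¬ (auxGraph G).Reachable ⟨(y, z), hyz⟩ ⟨(z, x), hzx⟩ ∧
    ¬ (auxGraph G).Reachable ⟨(x, y), hxy⟩ ⟨(z, x), hzx⟩ ∧
    ((EdgeOriented A x y ∧ EdgeOriented A y z ∧ ¬ EdgeOriented A z x) ∨
     (EdgeOriented A x y ∧ ¬ EdgeOriented A y z ∧ EdgeOriented A z x) ∨
     (¬ EdgeOriented A x y ∧ EdgeOriented A y z ∧ EdgeOriented A z x))

/-- A proper interval graph: intersection graph of a family of real intervals
none of which contains another. -/
def IsProperIntervalGraph {V : Type*} (G : SimpleGraph V) : Prop :=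
  ∃ l r : V → ℝ, (∀ v, l v ≤ r v) ∧
    (∀ u v : V, u ≠ v → ¬ (l u ≤ l v ∧ r v ≤ r u)) ∧
    (∀ u v : V, u ≠ v → (G.Adj u v ↔ l u ≤ r v ∧ l v ≤ r u))

namespace S12
variable {V : Type*}


lemma walk_of_transGen (A : V → V → Prop) {a b : V} (h : Relation.TransGen A a b) :
    ∃ (n : ℕ) (g : ℕ → V), 1 ≤ n ∧ g 0 = a ∧ g n = b ∧ ∀ i < n, A (g i) (g (i+1)) := by
  induction h with
  | @single c h =>
    refine ⟨1, fun i => if i = 0 then a else c, le_refl 1, by simp, by simp, ?_⟩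
    intro i hi
    interval_cases i
    simpa using h
  | @tail b' c' hab hbc ih =>
    obtain ⟨n, g, h1, h0, hn, hs⟩ := ih
    refine ⟨n+1, fun i => if i ≤ n then g i else c', by omega, by simp [h0], by simp, ?_⟩
    intro i hi
    rcases Nat.lt_or_ge i n with hin | hin
    · simpa [Nat.le_of_lt hin, Nat.succ_le_of_lt hin] using hs i hin
    · have hieq : i = n := by omega
      subst hieq
      simpa [hn] using hbc

lemma cycle_of_closed_walk (A : V → V → Prop) (hasym : IsOrientedGraph A) :
    ∀ n : ℕ, ∀ g : ℕ → V, 1 ≤ n → g n = g 0 → (∀ i < n, A (g i) (g (i+1))) →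
      HasDirectedCycle A := by
  intro n
  induction n using Nat.strong_induction_on with
  | _ n ih =>
  intro g h1 hc hs
  by_cases hdup : ∃ i j, i < j ∧ j < n ∧ g i = g j
  · obtain ⟨i, j, hij, hjn, he⟩ := hdup
    refine ih (j - i) (by omega) (fun t => g (i + t)) (by omega) ?_ ?_
    · show g (i + (j - i)) = g (i + 0)
      have h2 : i + (j - i) = j := by omega
      rw [h2, ← he, Nat.add_zero]
    · intro t ht
      show A (g (i + t)) (g (i + (t+1)))
      have h3 : i + (t + 1) = (i + t) + 1 := by omega
      rw [h3]
      exact hs (i + t) (by omega)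
  · push_neg at hdup
    have h2 : 2 ≤ n := by
      rcases Nat.lt_or_ge n 2 with h | h
      · have hn1 : n = 1 := by omega
        subst hn1
        have := hs 0 (by omega)
        rw [hc] at this
        exact absurd this (hasym _ _ this)
      · exact h
    haveI : NeZero n := ⟨by omega⟩
    haveI : Fact (1 < n) := ⟨by omega⟩
    refine ⟨n, fun k => g k.val, h2, ?_, fun _ => Set.mem_univ _, ?_⟩
    · intro k1 k2 hk
      simp only at hk
      by_contra hne
      rcases Nat.lt_trichotomy k1.val k2.val with h | h | h
      · exact hdup _ _ h (ZMod.val_lt k2) hk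
      · exact hne (ZMod.val_injective n h)
      · exact hdup _ _ h (ZMod.val_lt k1) hk.symm
    · intro i
      show A (g i.val) (g (i+1).val)
      have hval : (i + 1).val = (i.val + 1) % n := by
        rw [ZMod.val_add, ZMod.val_one]
      rcases Nat.lt_or_ge (i.val + 1) n with h | h
      · rw [hval, Nat.mod_eq_of_lt h]
        exact hs i.val (by omega)
      · have hin : i.val + 1 = n := by have := ZMod.val_lt i; omega
        rw [hval, hin, Nat.mod_self]
        have h4 := hs i.val (by omega)
        rw [show i.val + 1 = n from hin, hc] at h4
        exact h4

lemma cycle_of_transGen_self (A : V → V → Prop) (hasym : IsOrientedGraph A) {v : V}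
    (h : Relation.TransGen A v v) : HasDirectedCycle A := by
  obtain ⟨n, g, h1, h0, hn, hs⟩ := walk_of_transGen A h
  exact cycle_of_closed_walk A hasym n g h1 (by rw [hn, h0]) hs

lemma exists_linear_ext [Fintype V] (A : V → V → Prop)
    (hnc : ∀ v : V, ¬ Relation.TransGen A v v) (hirr : ∀ v : V, ¬ A v v) :
    ∃ τ : V → ℝ, Function.Injective τ ∧ ∀ u v : V, A u v → τ u < τ v := by
  classical
  have hanti : ∀ a b : V, Relation.ReflTransGen A a b → Relation.ReflTransGen A b a → a = b := by
    intro a b hab hba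
    by_contra hne
    rcases Relation.reflTransGen_iff_eq_or_transGen.mp hab with h | h
    · exact hne h.symm
    rcases Relation.reflTransGen_iff_eq_or_transGen.mp hba with h' | h'
    · exact hne h'
    exact hnc a (h.trans h')
  haveI : IsPartialOrder V (Relation.ReflTransGen A) :=
    { refl := fun a => Relation.ReflTransGen.refl
      trans := fun a b c => Relation.ReflTransGen.trans
      antisymm := hanti }
  obtain ⟨s, hs, hsub⟩ := extend_partialOrder (Relation.ReflTransGen A)
  haveI := hs
  have key : ∀ a b : V, a ≠ b → s a b →
      (Finset.univ.filter (fun w => s w a)).card < (Finset.univ.filter (fun w => s w b)).card := by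
    intro a b hab hsab
    apply Finset.card_lt_card
    constructor
    · intro w hw
      simp only [Finset.mem_filter, Finset.mem_univ, true_and] at hw ⊢
      exact hs.trans _ _ _ hw hsab
    · intro hsub2
      have hb : b ∈ Finset.univ.filter (fun w => s w b) := by
        simp [hs.refl b]
      have hmem := hsub2 hb
      simp only [Finset.mem_filter, Finset.mem_univ, true_and] at hmem
      exact hab (hs.antisymm _ _ hsab hmem)
  refine ⟨fun v => ((Finset.univ.filter (fun w => s w v)).card : ℝ), ?_, ?_⟩
  · intro u v huv
    simp only [Nat.cast_inj] at huv
    by_contra hne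
    rcases hs.total u v with h | h
    · exact absurd huv (Nat.ne_of_lt (key u v hne h))
    · exact absurd huv.symm (Nat.ne_of_lt (key v u (Ne.symm hne) h))
  · intro u v hA
    have hne : u ≠ v := by
      rintro rfl; exact hirr u hA
    have hsuv : s u v := hsub _ _ (Relation.ReflTransGen.single hA)
    show ((Finset.univ.filter (fun w => s w u)).card : ℝ) <
      ((Finset.univ.filter (fun w => s w v)).card : ℝ)
    exact_mod_cast key u v hne hsuv


section Defs
variable (G : SimpleGraph V)


/-- closed neighbourhood equality -/
def CN (u v : V) : Prop := ∀ w : V, (w = u ∨ G.Adj u w) ↔ (w = v ∨ G.Adj v w)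

/-- twin equivalence -/
def TwEq (u v : V) : Prop := u = v ∨ CN G u v

variable {G}

lemma CN.symm {u v : V} (h : CN G u v) : CN G v u := fun w => (h w).symm

lemma CN.trans' {u v w : V} (h : CN G u v) (h' : CN G v w) : CN G u w :=
  fun z => (h z).trans (h' z)

lemma CN.adj {u v : V} (h : CN G u v) (hne : u ≠ v) : G.Adj u v := by
  have := (h u).mp (Or.inl rfl)
  rcases this with h' | h'
  · exact absurd h' hne
  · exact h'.symm

lemma CN.transfer {u v w : V} (h : CN G u v) (h1 : w ≠ u) (h2 : w ≠ v) :
    (G.Adj u w ↔ G.Adj v w) := by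
  have := h w
  constructor
  · intro ha
    rcases this.mp (Or.inr ha) with h' | h'
    · exact absurd h' h2
    · exact h'
  · intro ha
    rcases this.mpr (Or.inr ha) with h' | h'
    · exact absurd h' h1
    · exact h'

lemma TwEq.refl (u : V) : TwEq G u u := Or.inl rfl

lemma TwEq.symm {u v : V} (h : TwEq G u v) : TwEq G v u := by
  rcases h with h | h
  · exact Or.inl h.symm
  · exact Or.inr h.symm

lemma TwEq.trans' {u v w : V} (h : TwEq G u v) (h' : TwEq G v w) : TwEq G u w := by
  rcases h with rfl | h
  · exact h'
  rcases h' with rfl | h'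
  · exact Or.inr h
  · exact Or.inr (h.trans' h')

lemma TwEq.adj {u v : V} (h : TwEq G u v) (hne : u ≠ v) : G.Adj u v := by
  rcases h with h | h
  · exact absurd h hne
  · exact h.adj hne

lemma TwEq.reachable {u v : V} (h : TwEq G u v) : G.Reachable u v := by
  rcases eq_or_ne u v with rfl | hne
  · exact .refl u
  · exact (h.adj hne).reachable

lemma TwEq.transfer {u v w : V} (h : TwEq G u v) (h1 : w ≠ u) (h2 : w ≠ v) :
    (G.Adj u w ↔ G.Adj v w) := by
  rcases h with rfl | h
  · exact Iff.rfl
  · exact h.transfer h1 h2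

variable (G)

/-- membership of the (directed) edge `(x,y)` in the `auxGraph`-component of `p₀` -/
def InC (p₀ : EdgePair G) (x y : V) : Prop :=
  ∃ h : G.Adj x y, (auxGraph G).Reachable p₀ ⟨(x, y), h⟩

variable {G}

lemma InC.adj {p₀ : EdgePair G} {x y : V} (h : InC G p₀ x y) : G.Adj x y := h.1

lemma aux_adj_second {x y w : V} (h1 : G.Adj x y) (h2 : G.Adj w y) (hne : x ≠ w)
    (hn : ¬ G.Adj x w) : (auxGraph G).Adj ⟨(x,y),h1⟩ ⟨(w,y),h2⟩ := by
  rw [auxGraph, SimpleGraph.fromRel_adj]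
  constructor
  · intro h
    apply hne
    have := congrArg (fun z => z.1.1) h
    exact this
  · exact Or.inl (Or.inr (Or.inl ⟨hn, rfl⟩))

lemma aux_adj_swap {x y : V} (h1 : G.Adj x y) :
    (auxGraph G).Adj ⟨(x,y),h1⟩ ⟨(y,x),h1.symm⟩ := by
  rw [auxGraph, SimpleGraph.fromRel_adj]
  constructor
  · intro h
    have := congrArg (fun z => z.1.1) h
    exact h1.ne this
  · exact Or.inl (Or.inr (Or.inr ⟨rfl, rfl⟩))

lemma InC.symm {p₀ : EdgePair G} {x y : V} (h : InC G p₀ x y) : InC G p₀ y x := by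
  obtain ⟨hadj, hr⟩ := h
  exact ⟨hadj.symm, hr.trans (aux_adj_swap hadj).reachable⟩

lemma InC.step2 {p₀ : EdgePair G} {x y w : V} (h : InC G p₀ x y) (h2 : G.Adj w y)
    (hne : x ≠ w) (hn : ¬ G.Adj x w) : InC G p₀ w y := by
  obtain ⟨hadj, hr⟩ := h
  exact ⟨h2, hr.trans (aux_adj_second hadj h2 hne hn).reachable⟩

lemma aux_adj_reach_fst {p q : EdgePair G} (h : (auxGraph G).Adj p q) :
    G.Reachable p.1.1 q.1.1 := by
  rw [auxGraph, SimpleGraph.fromRel_adj] at h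
  obtain ⟨-, h⟩ := h
  have hp : G.Adj p.1.1 p.1.2 := p.2
  have hq : G.Adj q.1.1 q.1.2 := q.2
  rcases h with (⟨h1, -⟩ | ⟨-, h2⟩ | ⟨h3, -⟩) | (⟨h1, -⟩ | ⟨-, h2⟩ | ⟨h3, h4⟩)
  · rw [h1]
  · exact hp.reachable.trans (by rw [h2]; exact hq.symm.reachable)
  · rw [h3]; exact hq.symm.reachable
  · rw [← h1]
  · exact hp.reachable.trans (by rw [← h2]; exact hq.symm.reachable)
  · rw [← h4]; exact hq.symm.reachable

lemma aux_reach_fst {p q : EdgePair G} (h : (auxGraph G).Reachable p q) :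
    G.Reachable p.1.1 q.1.1 := by
  obtain ⟨w⟩ := h
  induction w with
  | nil => exact .refl _
  | cons hadj _ ih => exact (aux_adj_reach_fst hadj).trans ih

lemma InC.reach_fst {p₀ : EdgePair G} {x y : V} (h : InC G p₀ x y) :
    G.Reachable p₀.1.1 x := by
  obtain ⟨hadj, hr⟩ := h
  exact aux_reach_fst hr

/-- edges with equal closed neighbourhoods are isolated in the aux graph -/
lemma aux_adj_of_CN {x y : V} (hcn : CN G x y) (h1 : G.Adj x y) (q : EdgePair G)
    (hadj : (auxGraph G).Adj ⟨(x,y),h1⟩ q) : q = ⟨(y,x), h1.symm⟩ := by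
  obtain ⟨⟨a, b⟩, hab⟩ := q
  rw [auxGraph, SimpleGraph.fromRel_adj] at hadj
  obtain ⟨hne, h⟩ := hadj
  have hnexy : (⟨(x,y),h1⟩ : EdgePair G) ≠ ⟨(a,b),hab⟩ := hne
  have hpair : (x, y) ≠ (a, b) := fun hc => hnexy (Subtype.ext hc)
  simp only [auxRel] at h
  rcases h with (⟨hxa, hyb⟩ | ⟨hxa, hyb⟩ | ⟨hxa, hyb⟩) | (⟨hxa, hyb⟩ | ⟨hxa, hyb⟩ | ⟨hxa, hyb⟩)
  · -- x = a, ¬ Adj y b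
    exfalso
    have hab' : G.Adj x b := by rw [hxa]; exact hab
    have hbx : b ≠ x := hab'.ne'
    have hby : b ≠ y := fun hc => hpair (by rw [← hxa, hc])
    exact hyb ((hcn.transfer hbx hby).mp hab')
  · -- ¬ Adj x a, y = b
    exfalso
    have hab' : G.Adj a y := by rw [hyb]; exact hab
    have hax : a ≠ x := fun hc => hpair (by rw [hc, ← hyb])
    have hay : a ≠ y := hab'.ne
    exact hxa ((hcn.transfer hax hay).mpr hab'.symm)
  · -- x = b, y = a
    apply Subtype.ext
    show (a, b) = (y, x)
    rw [← hxa, ← hyb]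
  · -- a = x, ¬ Adj b y
    exfalso
    have hab' : G.Adj x b := by rw [← hxa]; exact hab
    have hbx : b ≠ x := hab'.ne'
    have hby : b ≠ y := fun hc => hpair (by rw [hxa, hc])
    exact hyb ((hcn.transfer hbx hby).mp hab').symm
  · -- ¬ Adj a x, b = y
    exfalso
    have hab' : G.Adj a y := by rw [← hyb]; exact hab
    have hax : a ≠ x := fun hc => hpair (by rw [hc, hyb])
    have hay : a ≠ y := hab'.ne
    exact hxa (((hcn.transfer hax hay).mpr hab'.symm).symm)
  · -- a = y, b = x
    apply Subtype.ext
    show (a, b) = (y, x)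
    rw [hxa, hyb]

lemma comp_of_CN : ∀ (n : ℕ) {x y : V} (hxy : G.Adj x y), CN G x y →
    ∀ (q : EdgePair G) (w : (auxGraph G).Walk ⟨(x,y),hxy⟩ q), w.length = n →
      q = ⟨(x,y),hxy⟩ ∨ q = ⟨(y,x),hxy.symm⟩ := by
  intro n
  induction n with
  | zero =>
    intro x y hxy hcn q w hlen
    left
    have := SimpleGraph.Walk.eq_of_length_eq_zero hlen
    exact this.symm
  | succ n ih =>
    intro x y hxy hcn q w hlen
    cases w with
    | nil => simp at hlen
    | cons hadj w' =>
      rename_i q'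
      have hq' : q' = ⟨(y,x), hxy.symm⟩ := aux_adj_of_CN hcn hxy q' hadj
      subst hq'
      have hlen' : w'.length = n := by simpa using hlen
      rcases ih hxy.symm hcn.symm q w' hlen' with h | h
      · right; exact h
      · left; exact h

lemma not_CN_of_InC {p₀ : EdgePair G} (hp : ¬ CN G p₀.1.1 p₀.1.2) {x y : V}
    (h : InC G p₀ x y) : ¬ CN G x y := by
  intro hcn
  obtain ⟨hadj, hr⟩ := h
  obtain ⟨w⟩ := hr.symm
  rcases comp_of_CN w.length hadj hcn p₀ w rfl with h' | h'
  · subst h'; exact hp hcn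
  · subst h'; exact hp hcn.symm



end Defs

/-- a proper interval representation of `G` -/
structure Rep (G : SimpleGraph V) (l r : V → ℝ) : Prop where
  lr : ∀ v, l v ≤ r v
  nc : ∀ u v : V, u ≠ v → ¬ (l u ≤ l v ∧ r v ≤ r u)
  adj : ∀ u v : V, u ≠ v → (G.Adj u v ↔ l u ≤ r v ∧ l v ≤ r u)

namespace Rep
variable {G : SimpleGraph V} {l r : V → ℝ} (hR : Rep G l r)
include hR

lemma flip : Rep G (fun v => -(r v)) (fun v => -(l v)) := by
  refine ⟨fun v => by simpa using hR.lr v, fun u v huv => ?_, fun u v huv => ?_⟩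
  · intro ⟨ha, hb⟩
    exact hR.nc u v huv ⟨by linarith, by linarith⟩
  · rw [hR.adj u v huv]
    constructor
    · intro ⟨ha, hb⟩; exact ⟨by linarith, by linarith⟩
    · intro ⟨ha, hb⟩; exact ⟨by linarith, by linarith⟩

lemma linj {u v : V} (h : l u = l v) : u = v := by
  by_contra hne
  have a := hR.nc u v hne
  have b := hR.nc v u (Ne.symm hne)
  push_neg at a b
  have := a h.le
  have := b h.ge
  linarith

lemma rmono {u v : V} (hne : u ≠ v) (h : l u < l v) : r u < r v := by
  by_contra hc
  exact hR.nc u v hne ⟨h.le, by linarith⟩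

lemma adj_le {u v : V} (hadj : G.Adj u v) (h : l u < l v) : l v ≤ r u :=
  ((hR.adj u v hadj.ne).mp hadj).2

lemma adj_of {u v : V} (hne : u ≠ v) (h : l u < l v) (h2 : l v ≤ r u) : G.Adj u v := by
  rw [hR.adj u v hne]
  exact ⟨le_trans (hR.lr u) (hR.rmono hne h).le, h2⟩

lemma umbL {u v w : V} (h1 : l u < l v) (h2 : l v < l w) (hadj : G.Adj u w) : G.Adj u v := by
  apply hR.adj_of (fun hc => by rw [hc] at h1; linarith) h1
  have := hR.adj_le hadj (h1.trans h2)
  linarith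

lemma umbR {u v w : V} (h1 : l u < l v) (h2 : l v < l w) (hadj : G.Adj u w) : G.Adj v w := by
  apply hR.adj_of (fun hc => by rw [hc] at h2; linarith) h2
  have h3 := hR.adj_le hadj (h1.trans h2)
  have h4 := hR.rmono (fun hc => by rw [hc] at h1; linarith) h1
  linarith

lemma reach_between {u w : V} (h : G.Reachable u w) :
    ∀ v : V, l u < l v → l v < l w → G.Reachable u v := by
  obtain ⟨p⟩ := h
  induction p with
  | nil => intro v hv1 hv2; linarith
  | @cons a b c hadj q ih =>
    intro v hv1 hv2
    rcases lt_trichotomy (l b) (l v) with h | h | h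
    · exact (hadj.reachable).trans (ih v h hv2)
    · rw [← hR.linj h]
      exact hadj.reachable
    · exact (hR.umbL hv1 h hadj).reachable

lemma exists_left_nbr {u x : V} (h : G.Reachable u x) (hlt : l u < l x) :
    ∃ w, G.Adj w x ∧ l w < l x := by
  obtain ⟨p⟩ := h
  induction p with
  | nil => linarith
  | @cons a b c hadj q ih =>
    rcases lt_trichotomy (l b) (l c) with h | h | h
    · exact ih h
    · exact ⟨a, hR.linj h ▸ hadj, hlt⟩
    · exact ⟨a, hR.umbL hlt h hadj, hlt⟩


lemma CN_of_between {a b x : V} (hcn : CN G a b) (hab : G.Adj a b)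
    (h1 : l a < l x) (h2 : l x < l b) : CN G a x := by
  have hax : G.Adj a x := hR.umbL h1 h2 hab
  have hxb : G.Adj x b := hR.umbR h1 h2 hab
  intro w
  constructor
  · rintro (rfl | haw)
    · exact Or.inr hax.symm
    · rcases eq_or_ne w x with rfl | hwx
      · exact Or.inl rfl
      right
      rcases eq_or_ne w b with rfl | hwb
      · exact hxb
      have hbw : G.Adj b w := (hcn.transfer haw.ne' hwb).mp haw
      rcases lt_trichotomy (l w) (l x) with h | h | h
      · exact (hR.umbL h h2 hbw.symm).symm
      · exact absurd (hR.linj h) hwx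
      · exact hR.umbR h1 h haw
  · rintro (rfl | hxw)
    · exact Or.inr hax
    rcases eq_or_ne w a with rfl | hwa
    · exact Or.inl rfl
    right
    rcases lt_trichotomy (l w) (l a) with h | h | h
    · exact (hR.umbL h h1 hxw.symm).symm
    · exact absurd (hR.linj h) hwa
    · rcases lt_trichotomy (l w) (l b) with h' | h' | h'
      · exact hR.umbL h h' hab
      · rw [hR.linj h']; exact hab
      · have hbw : G.Adj b w := hR.umbR h2 h' hxw
        exact (hcn.transfer (fun hc => by rw [hc] at h; linarith)
          (fun hc => by rw [hc] at h'; linarith)).mpr hbw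

lemma TwEq_of_between {a b x : V} (htw : TwEq G a b) (h1 : l a ≤ l x) (h2 : l x ≤ l b) :
    TwEq G a x := by
  rcases eq_or_lt_of_le h1 with h | h
  · exact Or.inl (hR.linj h)
  rcases eq_or_lt_of_le h2 with h' | h'
  · rw [hR.linj h']; exact htw
  rcases htw with rfl | hcn
  · linarith
  · exact Or.inr (hR.CN_of_between hcn (hcn.adj (fun hc => by rw [hc] at h; linarith)) h h')

/-- left/right comparisons -/
lemma lt_iff_r {u v : V} (hne : u ≠ v) : l u < l v ↔ r u < r v := by
  constructor
  · exact hR.rmono hne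
  · intro h
    rcases lt_trichotomy (l u) (l v) with h' | h' | h'
    · exact h'
    · exact absurd (hR.linj h') hne
    · have := hR.rmono hne.symm h'
      linarith

lemma oppOut {a b c : V} (hab : G.Adj a b) (hac : G.Adj a c) (hnbc : ¬ G.Adj b c)
    (hbc : b ≠ c) : ¬ ((l a < l b) ↔ (l a < l c)) := by
  have main : ∀ b c : V, G.Adj a b → G.Adj a c → ¬ G.Adj b c → l b < l c →
      ¬ ((l a < l b) ↔ (l a < l c)) := by
    intro b c hab hac hnbc hlt hiff
    rcases lt_trichotomy (l a) (l b) with h | h | h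
    · exact hnbc (hR.umbR h hlt hac)
    · exact hab.ne (hR.linj h)
    · have h2 : ¬ (l a < l c) := fun hc => (by linarith [hiff.mpr hc] : False)
      have h3 : l c < l a := by
        rcases lt_trichotomy (l c) (l a) with h' | h' | h'
        · exact h'
        · exact absurd (hR.linj h') hac.ne'
        · exact absurd h' h2
      exact hnbc (hR.umbL hlt h3 hab.symm)
  rcases lt_trichotomy (l b) (l c) with h | h | h
  · exact main b c hab hac hnbc h
  · exact absurd (hR.linj h) hbc
  · intro hiff
    exact main c b hac hab (fun hx => hnbc hx.symm) h hiff.symm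

lemma oppIn {a b c : V} (hba : G.Adj b a) (hca : G.Adj c a) (hnbc : ¬ G.Adj b c)
    (hbc : b ≠ c) : ¬ ((l b < l a) ↔ (l c < l a)) := by
  have := hR.flip.oppOut hba.symm hca.symm hnbc hbc
  intro hiff
  apply this
  constructor
  · intro h
    have : r c < r a := by
      rw [← hR.lt_iff_r hca.ne]
      rw [← hiff]
      rw [hR.lt_iff_r hba.ne]
      linarith
    simpa using this
  · intro h
    have h' : r c < r a := by simpa using h
    rw [← hR.lt_iff_r hca.ne] at h'
    rw [← hiff] at h'
    rw [hR.lt_iff_r hba.ne] at h'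
    simpa using h'

/-- adjacent vertices of the aux graph have opposite direction -/
lemma chi_alt {x y : EdgePair G} (hadj : (auxGraph G).Adj x y) :
    ¬ ((l x.1.1 < l x.1.2) ↔ (l y.1.1 < l y.1.2)) := by
  rw [auxGraph, SimpleGraph.fromRel_adj] at hadj
  obtain ⟨hne, hrel⟩ := hadj
  have main : ∀ p q : EdgePair G, p ≠ q → auxRel G p q →
      ¬ ((l p.1.1 < l p.1.2) ↔ (l q.1.1 < l q.1.2)) := by
    intro p q hpq hrel
    have hp : G.Adj p.1.1 p.1.2 := p.2
    have hq : G.Adj q.1.1 q.1.2 := q.2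
    rcases hrel with ⟨he, hn⟩ | ⟨hn, he⟩ | ⟨he1, he2⟩
    · have hne2 : p.1.2 ≠ q.1.2 := by
        intro hc
        exact hpq (Subtype.ext (Prod.ext he hc))
      rw [← he]
      exact hR.oppOut hp (he ▸ hq) hn hne2
    · have hne1 : p.1.1 ≠ q.1.1 := by
        intro hc
        exact hpq (Subtype.ext (Prod.ext hc he))
      rw [← he]
      exact hR.oppIn hp (he ▸ hq) hn hne1
    · rw [← he1, ← he2]
      intro hiff
      rcases lt_trichotomy (l p.1.1) (l p.1.2) with h | h | h
      · linarith [hiff.mp h]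
      · exact hp.ne (hR.linj h)
      · linarith [hiff.mpr h]
  rcases hrel with h | h
  · exact main x y hne h
  · intro hiff
    exact main y x (Ne.symm hne) h hiff.symm

lemma walk_parity {x y : EdgePair G} (p : (auxGraph G).Walk x y) :
    Even p.length ↔ ((l x.1.1 < l x.1.2) ↔ (l y.1.1 < l y.1.2)) := by
  induction p with
  | nil => simp
  | @cons a b c hadj q ih =>
    have h1 := hR.chi_alt hadj
    rw [SimpleGraph.Walk.length_cons, Nat.even_add_one, ih]
    tauto

lemma even_dist_iff {x y : EdgePair G} (h : (auxGraph G).Reachable x y) :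
    Even ((auxGraph G).dist x y) ↔ ((l x.1.1 < l x.1.2) ↔ (l y.1.1 < l y.1.2)) := by
  obtain ⟨p, hp⟩ := h.exists_walk_length_eq_dist
  rw [← hp]
  exact hR.walk_parity p

end Rep
section Main
variable {G : SimpleGraph V} {l r : V → ℝ} [Fintype V]

lemma meas_lt (hR : Rep G l r) {a b : V} (h : l a < l b) :
    {w : V | l w < l a}.ncard < {w : V | l w < l b}.ncard := by
  apply Set.ncard_lt_ncard _ (Set.toFinite _)
  rw [Set.ssubset_def]
  constructor
  · intro w hw; exact lt_trans hw h
  · intro hsub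
    exact lt_irrefl (l a) (hsub (show a ∈ {w | l w < l b} from h))

variable {p₀ : EdgePair G} {m : V}

lemma key (hR : Rep G l r) (hnt : ¬ CN G p₀.1.1 p₀.1.2)
    (hm : ∀ w, G.Reachable m w → l m ≤ l w) (hm0 : G.Reachable m p₀.1.1) :
    ∀ N, ∀ x y : V, {w : V | l w < l x}.ncard ≤ N → InC G p₀ x y → l x < l y →
    ∃ x', InC G p₀ x' y ∧ l x' < l y ∧
      (TwEq G m x' ∨ ∃ w, InC G p₀ w x' ∧ l w < l x') := by
  intro N
  induction N using Nat.strong_induction_on with | _ N ih =>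
  intro x y hcard hin hlt
  have hxy : G.Adj x y := hin.adj
  by_cases htw : TwEq G m x
  · exact ⟨x, hin, hlt, Or.inl htw⟩
  by_cases hdist : ∃ w, w ≠ y ∧ G.Adj w x ∧ ¬ G.Adj w y
  · obtain ⟨w, hwy, hwx, hnwy⟩ := hdist
    have hwltx : l w < l x := by
      rcases lt_trichotomy (l w) (l x) with h | h | h
      · exact h
      · exact absurd (hR.linj h) hwx.ne
      · rcases lt_trichotomy (l w) (l y) with h' | h' | h'
        · exact absurd (hR.umbR h h' hxy) hnwy
        · exact absurd (hR.linj h') hwy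
        · exact absurd (hR.umbR hlt h' hwx.symm).symm hnwy
    have hnyw : ¬ G.Adj y w := fun hc => hnwy hc.symm
    exact ⟨x, hin, hlt, Or.inr ⟨w, hin.symm.step2 hwx (Ne.symm hwy) hnyw, hwltx⟩⟩
  push_neg at hdist
  have hxm : x ≠ m := fun hc => htw (Or.inl hc.symm)
  have hreach : G.Reachable m x := hm0.trans hin.reach_fst
  have hlmx : l m < l x := lt_of_le_of_ne (hm x hreach) (fun hc => hxm (hR.linj hc).symm)
  obtain ⟨t₀, ht₀x, ht₀lt⟩ := hR.exists_left_nbr hreach hlmx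
  have ht₀ney : t₀ ≠ y := fun hc => by rw [hc] at ht₀lt; linarith
  have ht₀y : G.Adj t₀ y := hdist t₀ ht₀ney ht₀x
  have hncn : ¬ CN G x y := not_CN_of_InC hnt hin
  obtain ⟨z, hzy, hnzx, hzx, hzy'⟩ : ∃ z, G.Adj y z ∧ ¬ G.Adj x z ∧ z ≠ x ∧ z ≠ y := by
    by_contra hc
    push_neg at hc
    apply hncn
    intro w
    constructor
    · rintro (rfl | hxw)
      · exact Or.inr hxy.symm
      · rcases eq_or_ne w y with rfl | hwy
        · exact Or.inl rfl
        · exact Or.inr (hdist w hwy hxw.symm).symm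
    · rintro (rfl | hyw)
      · exact Or.inr hxy
      · rcases eq_or_ne w x with rfl | hwx
        · exact Or.inl rfl
        · by_cases hxw : G.Adj x w
          · exact Or.inr hxw
          · exact absurd (hc w hyw hxw hwx) hyw.ne'
  have hylz : l y < l z := by
    rcases lt_trichotomy (l z) (l x) with h | h | h
    · exact absurd (hR.umbL h hlt hzy.symm).symm hnzx
    · exact absurd (hR.linj h) hzx
    · rcases lt_trichotomy (l z) (l y) with h' | h' | h'
      · exact absurd (hR.umbL h h' hxy) hnzx
      · exact absurd (hR.linj h') hzy'
      · exact h'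
  have hinz : InC G p₀ z y := hin.step2 hzy.symm (Ne.symm hzx) hnzx
  have hnt₀z : ¬ G.Adj t₀ z := fun hc => hnzx (hR.umbR ht₀lt (hlt.trans hylz) hc)
  have ht₀nez : z ≠ t₀ := fun hc => by rw [hc] at hylz; linarith
  have hint₀ : InC G p₀ t₀ y := hinz.step2 ht₀y ht₀nez (fun hc => hnt₀z hc.symm)
  have hmlt : {w : V | l w < l t₀}.ncard < N := lt_of_lt_of_le (meas_lt hR ht₀lt) hcard
  exact ih _ hmlt t₀ y le_rfl hint₀ (ht₀lt.trans hlt)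

lemma pb (hR : Rep G l r) (hnt : ¬ CN G p₀.1.1 p₀.1.2)
    (hm : ∀ w, G.Reachable m w → l m ≤ l w)
    {β y : V} (hβ : TwEq G m β) (hin : InC G p₀ β y)
    (hlt : l β < l y) : InC G p₀ m y := by
  rcases eq_or_ne m β with rfl | hne
  · exact hin
  have hcn : CN G m β := hβ.resolve_left hne
  have hβy : G.Adj β y := hin.adj
  have hadjmβ : G.Adj m β := hcn.adj hne
  have hrβ : G.Reachable m β := hadjmβ.reachable
  have hlmβ : l m ≤ l β := hm β hrβ
  have hym : y ≠ m := fun hc => by rw [hc] at hlt; linarith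
  have hyβ : y ≠ β := hβy.ne'
  have hadjmy : G.Adj m y := (hcn.transfer hym hyβ).mpr hβy
  have hncn : ¬ CN G β y := not_CN_of_InC hnt hin
  obtain ⟨w, hyw, hnβw, hwβ, hwy⟩ : ∃ w, G.Adj y w ∧ ¬ G.Adj β w ∧ w ≠ β ∧ w ≠ y := by
    by_contra hc
    push_neg at hc
    apply hncn
    intro w
    constructor
    · rintro (rfl | hβw)
      · exact Or.inr hβy.symm
      · rcases eq_or_ne w y with rfl | hwy
        · exact Or.inl rfl
        right
        by_contra hnyw
        have hwβ' : w ≠ β := hβw.ne'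
        have hwlβ : l w < l β := by
          rcases lt_trichotomy (l w) (l β) with h | h | h
          · exact h
          · exact absurd (hR.linj h) hwβ'
          · rcases lt_trichotomy (l w) (l y) with h' | h' | h'
            · exact absurd (hR.umbR h h' hβy) (fun hc' => hnyw hc'.symm)
            · exact absurd (hR.linj h') hwy
            · exact absurd (hR.umbR hlt h' hβw) hnyw
        have hrw : G.Reachable m w := hrβ.trans hβw.reachable
        rcases eq_or_ne w m with rfl | hwm
        · exact hnyw hadjmy.symm
        · have htww : TwEq G m w := hR.TwEq_of_between (Or.inr hcn) (hm w hrw) hwlβ.le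
          exact hnyw ((htww.transfer hym (Ne.symm hwy)).mp hadjmy).symm
    · rintro (rfl | hyw)
      · exact Or.inr hβy
      · rcases eq_or_ne w β with rfl | hwβ
        · exact Or.inl rfl
        by_cases hβw : G.Adj β w
        · exact Or.inr hβw
        · exact absurd (hc w hyw hβw hwβ) hyw.ne'
  have hwm : w ≠ m := by
    intro hc; subst hc; exact hnβw hadjmβ.symm
  have hinw : InC G p₀ w y := hin.step2 hyw.symm (Ne.symm hwβ) hnβw
  have hnwm : ¬ G.Adj w m := by
    intro hc
    exact hnβw ((hcn.transfer hwm hwβ).mp hc.symm)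
  exact hinw.step2 hadjmy hwm hnwm

lemma reach (hR : Rep G l r) (hnt : ¬ CN G p₀.1.1 p₀.1.2)
    (hm : ∀ w, G.Reachable m w → l m ≤ l w) (hm0 : G.Reachable m p₀.1.1) :
    ∀ N, ∀ y x : V, {w : V | l w < l y}.ncard ≤ N → InC G p₀ x y → l x < l y →
    Relation.ReflTransGen (fun a b => InC G p₀ a b ∧ l a < l b) m y := by
  intro N
  induction N using Nat.strong_induction_on with | _ N ih =>
  intro y x hcard hin hlt
  obtain ⟨x', hin', hlt', hcase⟩ :=
    key hR hnt hm hm0 ({w : V | l w < l x}.ncard) x y le_rfl hin hlt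
  rcases hcase with htw | ⟨w, hinw, hwlt⟩
  · have hminc : InC G p₀ m y := pb hR hnt hm htw hin' hlt'
    have hlmy : l m < l y :=
      lt_of_le_of_lt (hm x' (hm0.trans hin'.reach_fst)) hlt'
    exact Relation.ReflTransGen.single ⟨hminc, hlmy⟩
  · have hstep := ih ({w : V | l w < l x'}.ncard)
      (lt_of_lt_of_le (meas_lt hR hlt') hcard) x' w le_rfl hinw hwlt
    exact hstep.tail ⟨hin', hlt'⟩

lemma gb (hR : Rep G l r) (hnt : ¬ CN G p₀.1.1 p₀.1.2)
    (hm : ∀ w, G.Reachable m w → l m ≤ l w) (hm0 : G.Reachable m p₀.1.1) :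
    ∀ N, ∀ y x : V, {w : V | l w < l y}.ncard ≤ N → InC G p₀ x y → l x < l y →
    ∃ a b, InC G p₀ a b ∧ TwEq G m a ∧ l a < l b := by
  intro N
  induction N using Nat.strong_induction_on with | _ N ih =>
  intro y x hcard hin hlt
  obtain ⟨x', hin', hlt', hcase⟩ :=
    key hR hnt hm hm0 ({w : V | l w < l x}.ncard) x y le_rfl hin hlt
  rcases hcase with htw | ⟨w, hinw, hwlt⟩
  · exact ⟨x', y, hin', htw, hlt'⟩
  · exact ih ({w : V | l w < l x'}.ncard)
      (lt_of_lt_of_le (meas_lt hR hlt') hcard) x' w le_rfl hinw hwlt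

end Main

section Construction
variable [Fintype V] (G : SimpleGraph V) (l : V → ℝ) (A : V → V → Prop)

open Classical in
noncomputable def clv (v : V) : ℝ :=
  ((Finset.univ.filter (fun w => TwEq G v w)).image l).min' (by
    refine ⟨l v, Finset.mem_image.mpr ⟨v, ?_, rfl⟩⟩
    simp [TwEq.refl])

open Classical in
noncomputable def smin (v : V) : ℝ :=
  ((Finset.univ.filter (fun w => G.Reachable v w)).image l).min'
    ⟨l v, Finset.mem_image.mpr ⟨v, by simp [SimpleGraph.Reachable.refl], rfl⟩⟩

open Classical in
noncomputable def smax (v : V) : ℝ :=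
  ((Finset.univ.filter (fun w => G.Reachable v w)).image l).max'
    ⟨l v, Finset.mem_image.mpr ⟨v, by simp [SimpleGraph.Reachable.refl], rfl⟩⟩

def flipc (v : V) : Prop :=
  ∃ a b, A a b ∧ ¬ TwEq G a b ∧ l b < l a ∧ G.Reachable v a

open Classical in
noncomputable def basev (v : V) : ℝ :=
  if flipc G l A v then smin G l v + smax G l v - clv G l v else clv G l v

variable {G l A}

open Classical

lemma clv_le (v : V) : clv G l v ≤ l v := by
  apply Finset.min'_le
  exact Finset.mem_image.mpr ⟨v, by simp [TwEq.refl], rfl⟩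

lemma clv_attain (v : V) : ∃ w, TwEq G v w ∧ l w = clv G l v := by
  have := Finset.min'_mem ((Finset.univ.filter (fun w => TwEq G v w)).image l)
    (by refine ⟨l v, Finset.mem_image.mpr ⟨v, ?_, rfl⟩⟩; simp [TwEq.refl])
  rw [Finset.mem_image] at this
  obtain ⟨w, hw, hweq⟩ := this
  simp only [Finset.mem_filter, Finset.mem_univ, true_and] at hw
  exact ⟨w, hw, hweq⟩

lemma clv_le_of (u v : V) (h : TwEq G v u) : clv G l v ≤ l u := by
  apply Finset.min'_le
  exact Finset.mem_image.mpr ⟨u, by simp [h], rfl⟩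

lemma clv_eq {u v : V} (h : TwEq G u v) : clv G l u = clv G l v := by
  apply le_antisymm
  · obtain ⟨w, hw, hweq⟩ := clv_attain (G := G) (l := l) v
    rw [← hweq]
    exact clv_le_of _ _ (h.trans' hw)
  · obtain ⟨w, hw, hweq⟩ := clv_attain (G := G) (l := l) u
    rw [← hweq]
    exact clv_le_of _ _ (h.symm.trans' hw)

lemma smin_le_of {u v : V} (h : G.Reachable v u) : smin G l v ≤ l u := by
  apply Finset.min'_le
  exact Finset.mem_image.mpr ⟨u, by simp [h], rfl⟩

lemma le_smax_of {u v : V} (h : G.Reachable v u) : l u ≤ smax G l v := by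
  apply Finset.le_max'
  exact Finset.mem_image.mpr ⟨u, by simp [h], rfl⟩

lemma smin_attain (v : V) : ∃ w, G.Reachable v w ∧ l w = smin G l v := by
  have := Finset.min'_mem ((Finset.univ.filter (fun w => G.Reachable v w)).image l)
    ⟨l v, Finset.mem_image.mpr ⟨v, by simp [SimpleGraph.Reachable.refl], rfl⟩⟩
  rw [Finset.mem_image] at this
  obtain ⟨w, hw, hweq⟩ := this
  simp only [Finset.mem_filter, Finset.mem_univ, true_and] at hw
  exact ⟨w, hw, hweq⟩

lemma smax_attain (v : V) : ∃ w, G.Reachable v w ∧ l w = smax G l v := by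
  have := Finset.max'_mem ((Finset.univ.filter (fun w => G.Reachable v w)).image l)
    ⟨l v, Finset.mem_image.mpr ⟨v, by simp [SimpleGraph.Reachable.refl], rfl⟩⟩
  rw [Finset.mem_image] at this
  obtain ⟨w, hw, hweq⟩ := this
  simp only [Finset.mem_filter, Finset.mem_univ, true_and] at hw
  exact ⟨w, hw, hweq⟩

lemma smin_eq {u v : V} (h : G.Reachable u v) : smin G l u = smin G l v := by
  apply le_antisymm
  · obtain ⟨w, hw, hweq⟩ := smin_attain (G := G) (l := l) v
    rw [← hweq]
    exact smin_le_of (h.trans hw)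
  · obtain ⟨w, hw, hweq⟩ := smin_attain (G := G) (l := l) u
    rw [← hweq]
    exact smin_le_of (h.symm.trans hw)

lemma smax_eq {u v : V} (h : G.Reachable u v) : smax G l u = smax G l v := by
  apply le_antisymm
  · obtain ⟨w, hw, hweq⟩ := smax_attain (G := G) (l := l) u
    rw [← hweq]
    exact le_smax_of (h.symm.trans hw)
  · obtain ⟨w, hw, hweq⟩ := smax_attain (G := G) (l := l) v
    rw [← hweq]
    exact le_smax_of (h.trans hw)

lemma flipc_eq {u v : V} (h : G.Reachable u v) : flipc G l A u ↔ flipc G l A v := by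
  constructor
  · rintro ⟨a, b, h1, h2, h3, h4⟩; exact ⟨a, b, h1, h2, h3, h.symm.trans h4⟩
  · rintro ⟨a, b, h1, h2, h3, h4⟩; exact ⟨a, b, h1, h2, h3, h.trans h4⟩

lemma smin_le_clv (v : V) : smin G l v ≤ clv G l v := by
  obtain ⟨w, hw, hweq⟩ := clv_attain (G := G) (l := l) v
  rw [← hweq]
  exact smin_le_of hw.reachable

lemma clv_le_smax (v : V) : clv G l v ≤ smax G l v :=
  le_trans (clv_le v) (le_smax_of (SimpleGraph.Reachable.refl v))

lemma basev_in (v : V) : smin G l v ≤ basev G l A v ∧ basev G l A v ≤ smax G l v := by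
  unfold basev
  split
  · constructor
    · have := clv_le_smax (G := G) (l := l) v; linarith
    · have := smin_le_clv (G := G) (l := l) v; linarith
  · exact ⟨smin_le_clv v, clv_le_smax v⟩

section WithRep
variable {r : V → ℝ} (hR : Rep G l r)
include hR

lemma clv_lt {u v : V} (hne : ¬ TwEq G u v) (hlt : l u < l v) : clv G l u < clv G l v := by
  rcases lt_or_ge (clv G l u) (clv G l v) with h | h
  · exact h
  exfalso
  obtain ⟨w, hw, hweq⟩ := clv_attain (G := G) (l := l) v
  have h1 : l w ≤ l u := by
    have := clv_le (G := G) (l := l) u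
    linarith
  have h2 : TwEq G w u := hR.TwEq_of_between (G := G) hw.symm h1 hlt.le
  exact hne (h2.symm.trans' hw.symm)

lemma sep {u v a b : V} (hnr : ¬ G.Reachable u v) (hra : G.Reachable u a)
    (hrb : G.Reachable v b) (hlt : l u < l v) : l a < l b := by
  rcases lt_trichotomy (l a) (l b) with h | h | h
  · exact h
  · exfalso
    exact hnr (((hR.linj h) ▸ hra).trans hrb.symm)
  · exfalso
    rcases lt_trichotomy (l u) (l b) with h' | h' | h'
    · exact hnr ((hR.reach_between hra b h' h).trans hrb.symm)
    · exact hnr (((hR.linj h') ▸ hrb).symm)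
    · exact hnr (((hR.reach_between hrb.symm u h' hlt).symm).trans hrb.symm)

lemma smax_lt_smin {u v : V} (hnr : ¬ G.Reachable u v) (hlt : l u < l v) :
    smax G l u < smin G l v := by
  obtain ⟨a, ha, haeq⟩ := smax_attain (G := G) (l := l) u
  obtain ⟨b, hb, hbeq⟩ := smin_attain (G := G) (l := l) v
  rw [← haeq, ← hbeq]
  exact sep hR hnr ha hb hlt

lemma basev_lt_cross {u v : V} (hnr : ¬ G.Reachable u v) (hlt : l u < l v) :
    basev G l A u < basev G l A v :=
  lt_of_le_of_lt (basev_in u).2 (lt_of_lt_of_le (smax_lt_smin hR hnr hlt) (basev_in v).1)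

omit hR in
lemma basev_eq_of_TwEq {u v : V} (h : TwEq G u v) : basev G l A u = basev G l A v := by
  have hr : G.Reachable u v := h.reachable
  unfold basev
  rw [show flipc G l A u = flipc G l A v from propext (flipc_eq hr),
    smin_eq hr, smax_eq hr, clv_eq h]

lemma clv_inj {u v : V} (h : clv G l u = clv G l v) : TwEq G u v := by
  obtain ⟨wu, hwu, hwueq⟩ := clv_attain (G := G) (l := l) u
  obtain ⟨wv, hwv, hwveq⟩ := clv_attain (G := G) (l := l) v
  have : wu = wv := hR.linj (by rw [hwueq, hwveq, h])
  exact (hwu.trans' (this ▸ hwv.symm))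

lemma TwEq_of_basev_eq {u v : V} (h : basev G l A u = basev G l A v) : TwEq G u v := by
  by_cases hr : G.Reachable u v
  · have h1 := smin_eq (G := G) (l := l) hr
    have h2 := smax_eq (G := G) (l := l) hr
    have h3 := flipc_eq (G := G) (l := l) (A := A) hr
    unfold basev at h
    by_cases hf : flipc G l A u
    · rw [if_pos hf, if_pos (h3.mp hf)] at h
      exact clv_inj hR (by linarith)
    · rw [if_neg hf, if_neg (fun hc => hf (h3.mpr hc))] at h
      exact clv_inj hR h
  · rcases lt_trichotomy (l u) (l v) with hlt | heq | hlt
    · exact absurd h (ne_of_lt (basev_lt_cross hR hr hlt))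
    · exact Or.inl (hR.linj heq)
    · exact absurd h.symm (ne_of_lt (basev_lt_cross hR (fun hc => hr hc.symm) hlt))

lemma basev_lt_asc {u v : V} (hre : G.Reachable u v) (hnt : ¬ TwEq G u v)
    (hnf : ¬ flipc G l A u) (hlt : l u < l v) : basev G l A u < basev G l A v := by
  unfold basev
  rw [if_neg hnf, if_neg (fun hc => hnf ((flipc_eq hre).mpr hc))]
  exact clv_lt hR hnt hlt

lemma basev_lt_desc {u v : V} (hre : G.Reachable u v) (hnt : ¬ TwEq G u v)
    (hf : flipc G l A u) (hlt : l v < l u) : basev G l A u < basev G l A v := by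
  unfold basev
  rw [if_pos hf, if_pos ((flipc_eq hre).mp hf), smin_eq hre, smax_eq hre]
  have := clv_lt hR (fun hc => hnt hc.symm) hlt
  linarith

end WithRep

end Construction

section Conflict
variable {G : SimpleGraph V} {l r : V → ℝ} [Fintype V] {A : V → V → Prop}

lemma conflict (hR : Rep G l r) (hsub : ∀ u v : V, A u v → G.Adj u v)
    (hasym : IsOrientedGraph A) (hcons : Consentaneous G A)
    {u v a b : V} (huv : A u v) (hab : A a b) (hntuv : ¬ TwEq G u v) (hntab : ¬ TwEq G a b)
    (hluv : l u < l v) (hlab : l b < l a) (hcomp : G.Reachable u a) :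
    HasDirectedCycle A := by
  have hadjuv : G.Adj u v := hsub u v huv
  have hadjab : G.Adj a b := hsub a b hab
  set p₁ : EdgePair G := ⟨(u, v), hadjuv⟩ with hp₁
  set p₂ : EdgePair G := ⟨(a, b), hadjab⟩ with hp₂
  by_cases hr12 : (auxGraph G).Reachable p₁ p₂
  · exfalso
    have hodd : Odd ((auxGraph G).dist p₁ p₂) := by
      rw [← Nat.not_even_iff_odd]  -- deprecated ok
      intro heven
      have := (hR.even_dist_iff hr12).mp heven
      have h1 : l p₁.1.1 < l p₁.1.2 := hluv
      have h2 : ¬ (l p₂.1.1 < l p₂.1.2) := by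
        show ¬ (l a < l b); linarith
      exact h2 (this.mp h1)
    exact hcons.1 ⟨p₁, p₂, huv, hab, hodd⟩
  -- saturation
  have sat1 : ∀ x y : V, InC G p₁ x y → l x < l y → A x y := by
    rintro x y ⟨hadj, hre⟩ hlt
    have heven : Even ((auxGraph G).dist p₁ ⟨(x, y), hadj⟩) :=
      (hR.even_dist_iff hre).mpr (iff_of_true hluv hlt)
    exact (hcons.2 p₁ ⟨(x, y), hadj⟩ hre heven).mp huv
  have sat2 : ∀ x y : V, InC G p₂ x y → l y < l x → A x y := by
    rintro x y ⟨hadj, hre⟩ hlt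
    have heven : Even ((auxGraph G).dist p₂ ⟨(x, y), hadj⟩) :=
      (hR.even_dist_iff hre).mpr (iff_of_false (by show ¬ (l a < l b); linarith)
        (by show ¬ (l x < l y); linarith))
    exact (hcons.2 p₂ ⟨(x, y), hadj⟩ hre heven).mp hab
  -- min and max of the component of u
  classical
  obtain ⟨m, hmmem, hmmin⟩ := Finset.exists_min_image
    (Finset.univ.filter (fun w => G.Reachable u w)) l
    ⟨u, by simp [SimpleGraph.Reachable.refl]⟩
  obtain ⟨M, hMmem, hMmax⟩ := Finset.exists_max_image
    (Finset.univ.filter (fun w => G.Reachable u w)) l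
    ⟨u, by simp [SimpleGraph.Reachable.refl]⟩
  simp only [Finset.mem_filter, Finset.mem_univ, true_and] at hmmem hMmem
  have hmin : ∀ w, G.Reachable m w → l m ≤ l w := by
    intro w hw
    exact hmmin w (by simp [hmmem.trans hw])
  have hmax : ∀ w, G.Reachable M w → l w ≤ l M := by
    intro w hw
    exact hMmax w (by simp [hMmem.trans hw])
  have hmaxr : ∀ w, G.Reachable M w → r w ≤ r M := by
    intro w hw
    rcases eq_or_ne w M with rfl | hne
    · exact le_refl _
    · exact (hR.rmono hne (lt_of_le_of_ne (hmax w hw) (fun hc => hne (hR.linj hc)))).le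
  have hminr : ∀ w, G.Reachable m w → r m ≤ r w := by
    intro w hw
    rcases eq_or_ne m w with rfl | hne
    · exact le_refl _
    · exact (hR.rmono hne (lt_of_le_of_ne (hmin w hw) (fun hc => hne (hR.linj hc)))).le
  have hmM' : ∀ w : V, G.Reachable M w → (fun x => -(r x)) M ≤ (fun x => -(r x)) w := by
    intro w hw
    simpa using hmaxr w hw
  -- leg 1 : ascending from m to M inside the component of p₁
  have hnt₁ : ¬ CN G p₁.1.1 p₁.1.2 := fun hc => hntuv (Or.inr hc)
  have hm0M1 : G.Reachable M p₁.1.1 := hMmem.symm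
  have hm0m1 : G.Reachable m p₁.1.1 := hmmem.symm
  have hinuv : InC G p₁ u v := ⟨hadjuv, SimpleGraph.Reachable.refl _⟩
  have hinvu : InC G p₁ v u := hinuv.symm
  obtain ⟨a₁, b₁, hin₁, htw₁, hlt₁⟩ := gb hR.flip hnt₁ hmM' hm0M1 _ u v le_rfl hinvu
    (by have := hR.rmono hadjuv.ne hluv; show -(r v) < -(r u); linarith)
  have hinMb₁ : InC G p₁ M b₁ := pb hR.flip hnt₁ hmM' htw₁ hin₁ hlt₁
  have hlb₁M : l b₁ < l M := by
    have h1 : r b₁ < r a₁ := by simpa using hlt₁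
    have hne : b₁ ≠ a₁ := fun hc => by rw [hc] at h1; linarith
    have h2 : l b₁ < l a₁ := (hR.lt_iff_r hne).mpr h1
    have h3 : l a₁ ≤ l M := hmax a₁ htw₁.reachable
    linarith
  have hreach1 := reach hR hnt₁ hmin hm0m1 _ M b₁ le_rfl hinMb₁.symm hlb₁M
  have hA1 : Relation.ReflTransGen A m M :=
    Relation.ReflTransGen.mono (fun x y h => sat1 x y h.1 h.2) _ _ hreach1
  -- leg 2 : descending from M to m inside the component of p₂
  have hnt₂ : ¬ CN G p₂.1.1 p₂.1.2 := fun hc => hntab (Or.inr hc)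
  have hm0m2 : G.Reachable m p₂.1.1 := hmmem.symm.trans hcomp
  have hm0M2 : G.Reachable M p₂.1.1 := hMmem.symm.trans hcomp
  have hinab : InC G p₂ a b := ⟨hadjab, SimpleGraph.Reachable.refl _⟩
  have hinba : InC G p₂ b a := hinab.symm
  obtain ⟨a₂, b₂, hin₂, htw₂, hlt₂⟩ := gb hR hnt₂ hmin hm0m2 _ a b le_rfl hinba hlab
  have hinmb₂ : InC G p₂ m b₂ := pb hR hnt₂ hmin htw₂ hin₂ hlt₂
  have hlb₂ : (fun z => -(r z)) b₂ < (fun z => -(r z)) m := by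
    have h1 : l m < l b₂ := lt_of_le_of_lt (hmin a₂ htw₂.reachable) hlt₂
    have hne : m ≠ b₂ := fun hc => by rw [hc] at h1; linarith
    have := hR.rmono hne h1
    show -(r b₂) < -(r m)
    linarith
  have hreach2 := reach hR.flip hnt₂ hmM' hm0M2 _ m b₂ le_rfl hinmb₂.symm hlb₂
  have hA2 : Relation.ReflTransGen A M m := by
    refine Relation.ReflTransGen.mono (fun x y h => sat2 x y h.1 ?_) _ _ hreach2
    have h2 : r y < r x := by simpa using h.2
    have hne : y ≠ x := fun hc => by rw [hc] at h2; linarith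
    exact (hR.lt_iff_r hne).mpr h2
  have hmM : m ≠ M := by
    intro hc
    have h1 : l m ≤ l u := hmmin u (by simp [SimpleGraph.Reachable.refl])
    have h2 : l v ≤ l M := hMmax v (by simp [hadjuv.reachable])
    rw [hc] at h1
    linarith
  have ht1 : Relation.TransGen A m M :=
    (Relation.reflTransGen_iff_eq_or_transGen.mp hA1).resolve_left (fun hc => hmM hc.symm)
  have ht2 : Relation.TransGen A M m :=
    (Relation.reflTransGen_iff_eq_or_transGen.mp hA2).resolve_left hmM
  exact cycle_of_transGen_self A hasym (ht1.trans ht2)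

end Conflict

end S12

/-- A consentaneous partially oriented graph whose underlying
graph is a proper interval graph can be completed to an acyclic local
tournament iff it contains no directed cycle. -/
theorem stmt_12 {V : Type*} [Fintype V] (G : SimpleGraph V) (A : V → V → Prop)
    (hsub : ∀ u v : V, A u v → G.Adj u v)
    (hasym : IsOrientedGraph A)
    (hpig : IsProperIntervalGraph G)
    (hcons : Consentaneous G A) :
    (∃ D : V → V → Prop, IsOrientation G D ∧ (∀ u v : V, A u v → D u v) ∧
        IsLocalTournament D ∧ ¬ HasDirectedCycle D) ↔
      ¬ HasDirectedCycle A := by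
  constructor
  · rintro ⟨D, hOr, hAD, hLT, hNC⟩ hcyc
    obtain ⟨n, f, hn, hinj, hmem, hstep⟩ := hcyc
    exact hNC ⟨n, f, hn, hinj, hmem, fun i => hAD _ _ (hstep i)⟩
  · intro hnc
    obtain ⟨l, r, h1, h2, h3⟩ := hpig
    have hR : S12.Rep G l r := ⟨h1, h2, h3⟩
    classical
    have hirr : ∀ v, ¬ A v v := fun v h => hasym v v h h
    have hnt : ∀ v, ¬ Relation.TransGen A v v :=
      fun v h => hnc (S12.cycle_of_transGen_self A hasym h)
    obtain ⟨τ, hτinj, hτmono⟩ := S12.exists_linear_ext A hnt hirr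
    set bs : V → ℝ := S12.basev G l A with hbs
    set ρ : V → V → Prop := fun u v => bs u < bs v ∨ (bs u = bs v ∧ τ u < τ v) with hρ
    have hρasym : ∀ u v, ρ u v → ¬ ρ v u := by
      intro u v h h'
      rcases h with h | ⟨he, ht⟩ <;> rcases h' with h' | ⟨he', ht'⟩ <;> linarith
    have hρtot : ∀ u v, u ≠ v → ρ u v ∨ ρ v u := by
      intro u v hne
      rcases lt_trichotomy (bs u) (bs v) with h | h | h
      · exact Or.inl (Or.inl h)
      · rcases lt_trichotomy (τ u) (τ v) with h' | h' | h'
        · exact Or.inl (Or.inr ⟨h, h'⟩)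
        · exact absurd (hτinj h') hne
        · exact Or.inr (Or.inr ⟨h.symm, h'⟩)
      · exact Or.inr (Or.inl h)
    set D : V → V → Prop := fun u v => G.Adj u v ∧ ρ u v with hDdef
    have hAD : ∀ u v, A u v → D u v := by
      intro u v hA
      have hadj := hsub u v hA
      refine ⟨hadj, ?_⟩
      by_cases htw : S12.TwEq G u v
      · exact Or.inr ⟨S12.basev_eq_of_TwEq htw, hτmono u v hA⟩
      · left
        have hre : G.Reachable u v := hadj.reachable
        rcases lt_trichotomy (l u) (l v) with hlt | heq | hlt
        · by_cases hf : S12.flipc G l A u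
          · exfalso
            obtain ⟨a, b, hab, hntab, hlab, hra⟩ := hf
            exact hnc (S12.conflict hR hsub hasym hcons hA hab htw hntab hlt hlab hra)
          · exact S12.basev_lt_asc hR hre htw hf hlt
        · exact absurd (hR.linj heq) hadj.ne
        · have hf : S12.flipc G l A u := ⟨u, v, hA, htw, hlt, SimpleGraph.Reachable.refl u⟩
          exact S12.basev_lt_desc hR hre htw hf hlt
    -- umbrella property for the new order
    have hbstrict : ∀ v x, G.Adj v x → ρ v x → ¬ S12.TwEq G v x → bs v < bs x := by
      intro v x hvx hρx htvx
      rcases hρx with h | ⟨he, -⟩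
      · exact h
      · exact absurd (S12.TwEq_of_basev_eq hR he) htvx
    have hlanalysis : ∀ v x, G.Adj v x → ¬ S12.TwEq G v x → bs v < bs x →
        (¬ S12.flipc G l A v → l v < l x) ∧ (S12.flipc G l A v → l x < l v) := by
      intro v x hvx htvx hbvx
      constructor
      · intro hnf
        rcases lt_trichotomy (l v) (l x) with h | h | h
        · exact h
        · exact absurd (hR.linj h) hvx.ne
        · exfalso
          have := S12.basev_lt_asc hR hvx.reachable.symm (fun hc => htvx hc.symm)
            (fun hc => hnf ((S12.flipc_eq hvx.reachable).mpr hc)) h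
          linarith
      · intro hf
        rcases lt_trichotomy (l x) (l v) with h | h | h
        · exact h
        · exact absurd (hR.linj h) hvx.ne'
        · exfalso
          have := S12.basev_lt_desc hR hvx.reachable.symm (fun hc => htvx hc.symm)
            ((S12.flipc_eq hvx.reachable).mp hf) h
          linarith
    have hauxOut : ∀ v x y, G.Adj v x → G.Adj v y → ρ v x → ρ v y → bs x < bs y →
        G.Adj x y := by
      intro v x y hvx hvy hρx hρy hlt
      have hxyne : x ≠ y := fun hc => by rw [hc] at hlt; exact lt_irrefl _ hlt
      by_cases htxy : S12.TwEq G x y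
      · exact htxy.adj hxyne
      by_cases htvx : S12.TwEq G v x
      · exact (htvx.transfer hvy.ne' (Ne.symm hxyne)).mp hvy
      by_cases htvy : S12.TwEq G v y
      · exact ((htvy.transfer hvx.ne' hxyne).mp hvx).symm
      have hbvx : bs v < bs x := hbstrict v x hvx hρx htvx
      have hbvy : bs v < bs y := hbstrict v y hvy hρy htvy
      by_cases hf : S12.flipc G l A v
      · have hlxv : l x < l v := (hlanalysis v x hvx htvx hbvx).2 hf
        have hlyx : l y < l x := by
          rcases lt_trichotomy (l y) (l x) with h | h | h
          · exact h
          · exact absurd (hR.linj h) (Ne.symm hxyne)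
          · exfalso
            have hfy : S12.flipc G l A y := (S12.flipc_eq hvy.reachable).mp hf
            have := S12.basev_lt_desc hR (hvy.reachable.symm.trans hvx.reachable)
              (fun hc => htxy hc.symm) hfy h
            linarith
        exact (hR.umbL hlyx hlxv hvy.symm).symm
      · have hlvx : l v < l x := (hlanalysis v x hvx htvx hbvx).1 hf
        have hlxy : l x < l y := by
          rcases lt_trichotomy (l x) (l y) with h | h | h
          · exact h
          · exact absurd (hR.linj h) hxyne
          · exfalso
            have hfy : ¬ S12.flipc G l A y :=
              fun hc => hf ((S12.flipc_eq hvy.reachable).mpr hc)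
            have := S12.basev_lt_asc hR (hvy.reachable.symm.trans hvx.reachable)
              (fun hc => htxy hc.symm) hfy h
            linarith
        exact hR.umbR hlvx hlxy hvy
    have hauxIn : ∀ v x y, G.Adj x v → G.Adj y v → ρ x v → ρ y v → bs x < bs y →
        G.Adj x y := by
      intro v x y hxv hyv hρx hρy hlt
      have hxyne : x ≠ y := fun hc => by rw [hc] at hlt; exact lt_irrefl _ hlt
      by_cases htxy : S12.TwEq G x y
      · exact htxy.adj hxyne
      by_cases htvx : S12.TwEq G v x
      · exact (htvx.transfer hyv.ne (Ne.symm hxyne)).mp hyv.symm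
      by_cases htvy : S12.TwEq G v y
      · exact ((htvy.transfer hxv.ne hxyne).mp hxv.symm).symm
      have hbxv : bs x < bs v := by
        rcases hρx with h | ⟨he, -⟩
        · exact h
        · exact absurd (S12.TwEq_of_basev_eq hR he.symm) htvx
      have hbyv : bs y < bs v := by
        rcases hρy with h | ⟨he, -⟩
        · exact h
        · exact absurd (S12.TwEq_of_basev_eq hR he.symm) htvy
      by_cases hf : S12.flipc G l A v
      · -- descending: l v < l y < l x
        have hlvy : l v < l y := by
          rcases lt_trichotomy (l v) (l y) with h | h | h
          · exact h
          · exact absurd (hR.linj h) hyv.ne'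
          · exfalso
            have := S12.basev_lt_desc hR hyv.reachable.symm htvy hf h
            linarith
        have hlyx : l y < l x := by
          rcases lt_trichotomy (l y) (l x) with h | h | h
          · exact h
          · exact absurd (hR.linj h) (Ne.symm hxyne)
          · exfalso
            have hfy : S12.flipc G l A y := (S12.flipc_eq hyv.reachable.symm).mp hf
            have := S12.basev_lt_desc hR (hyv.reachable.trans hxv.reachable.symm)
              (fun hc => htxy hc.symm) hfy h
            linarith
        exact (hR.umbR hlvy hlyx hxv.symm).symm
      · -- ascending: l x < l y < l v
        have hlxy' : l x < l y := by
          rcases lt_trichotomy (l x) (l y) with h | h | h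
          · exact h
          · exact absurd (hR.linj h) hxyne
          · exfalso
            have hfy : ¬ S12.flipc G l A y :=
              fun hc => hf ((S12.flipc_eq hyv.reachable.symm).mpr hc)
            have := S12.basev_lt_asc hR (hyv.reachable.trans hxv.reachable.symm)
              (fun hc => htxy hc.symm) hfy h
            linarith
        have hlyv : l y < l v := by
          rcases lt_trichotomy (l y) (l v) with h | h | h
          · exact h
          · exact absurd (hR.linj h) hyv.ne
          · exfalso
            have := S12.basev_lt_asc hR hyv.reachable.symm htvy hf h
            linarith
        exact hR.umbL hlxy' hlyv hxv
    -- assemble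
    have hLT : IsLocalTournament D := by
      refine ⟨fun u v h h' => hρasym u v h.2 h'.2, ?_, ?_⟩
      · intro v x y hvx hvy hne
        have hadj : G.Adj x y := by
          rcases lt_trichotomy (bs x) (bs y) with h | h | h
          · exact hauxOut v x y hvx.1 hvy.1 hvx.2 hvy.2 h
          · exact (S12.TwEq_of_basev_eq hR h).adj hne
          · exact (hauxOut v y x hvy.1 hvx.1 hvy.2 hvx.2 h).symm
        rcases hρtot x y hne with h | h
        · exact Or.inl ⟨hadj, h⟩
        · exact Or.inr ⟨hadj.symm, h⟩
      · intro v x y hxv hyv hne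
        have hadj : G.Adj x y := by
          rcases lt_trichotomy (bs x) (bs y) with h | h | h
          · exact hauxIn v x y hxv.1 hyv.1 hxv.2 hyv.2 h
          · exact (S12.TwEq_of_basev_eq hR h).adj hne
          · exact (hauxIn v y x hyv.1 hxv.1 hyv.2 hxv.2 h).symm
        rcases hρtot x y hne with h | h
        · exact Or.inl ⟨hadj, h⟩
        · exact Or.inr ⟨hadj.symm, h⟩
    have hNoCyc : ¬ HasDirectedCycle D := by
      rintro ⟨n, f, hn2, hinj, -, hstep⟩
      haveI : NeZero n := ⟨by omega⟩
      obtain ⟨i₀, -, hmax⟩ := Finset.exists_max_image Finset.univ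
        (fun i => toLex (bs (f i), τ (f i))) ⟨0, Finset.mem_univ 0⟩
      have h1 := (hstep i₀).2
      have hlt : toLex (bs (f i₀), τ (f i₀)) < toLex (bs (f (i₀+1)), τ (f (i₀+1))) := by
        rw [Prod.Lex.lt_iff]
        rcases h1 with h | ⟨he, ht⟩
        · exact Or.inl h
        · exact Or.inr ⟨he, ht⟩
      exact absurd (hmax (i₀+1) (Finset.mem_univ _)) (not_le.mpr hlt)
    refine ⟨D, ⟨fun u v h => h.1, fun u v h h' => hρasym u v h.2 h'.2, ?_⟩, hAD, hLT, hNoCyc⟩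
    intro u v hadj
    rcases hρtot u v hadj.ne with h | h
    · exact Or.inl ⟨hadj, h⟩
    · exact Or.inr ⟨hadj.symm, h⟩
end

section
/- Let P be a partially oriented complete graph whose arc set induces two vertex-disjoint locally transitive tournaments T' and T'' with V(T') ∪ V(T'') equal to the whole vertex set, and with no arcs between T' and T''. Then P can be completed to a locally transitive tournament. -/
namespace Stmt13Aux

def circ (a b : ℚ) : Prop := 0 < Int.fract (b - a) ∧ Int.fract (b - a) < 1/2

lemma fract_congr {a b : ℚ} (k : ℤ) (h : a - b = k) : Int.fract a = Int.fract b :=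
  Int.fract_eq_fract.2 ⟨k, h⟩

lemma circ_irrefl (a : ℚ) : ¬ circ a a := by simp [circ]

lemma fract_rev {a b : ℚ} (h : 0 < Int.fract (b - a)) :
    Int.fract (a - b) = 1 - Int.fract (b - a) := by
  have := Int.fract_neg (x := b - a) (ne_of_gt h)
  rw [neg_sub] at this
  exact this

lemma circ_asymm {a b : ℚ} (h : circ a b) : ¬ circ b a := by
  intro h'
  obtain ⟨h1', h2'⟩ := h'
  rw [fract_rev h.1] at h1' h2'
  linarith [h.2]

lemma circ_total {a b : ℚ} (h0 : Int.fract (b - a) ≠ 0) (h2 : Int.fract (b - a) ≠ 1/2) :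
    circ a b ∨ circ b a := by
  have hn : 0 < Int.fract (b - a) := lt_of_le_of_ne (Int.fract_nonneg _) (Ne.symm h0)
  rcases lt_or_gt_of_ne h2 with h | h
  · exact Or.inl ⟨hn, h⟩
  · refine Or.inr ⟨?_, ?_⟩ <;> rw [fract_rev hn]
    · linarith [Int.fract_lt_one (b - a)]
    · linarith

lemma circ_shift {a b : ℚ} (t : ℚ) : circ (a + t) (b + t) ↔ circ a b := by
  unfold circ
  rw [show b + t - (a + t) = b - a from by ring]

lemma circ_iff_lt {p a b : ℚ} (h : |Int.fract (a - p) - Int.fract (b - p)| < 1/2) :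
    circ a b ↔ Int.fract (a - p) < Int.fract (b - p) := by
  set α := Int.fract (a - p) with hα
  set β := Int.fract (b - p) with hβ
  have hαd : α = (a - p) - ⌊a - p⌋ := (Int.self_sub_floor _).symm
  have hβd : β = (b - p) - ⌊b - p⌋ := (Int.self_sub_floor _).symm
  have key : Int.fract (b - a) = Int.fract (β - α) := by
    refine fract_congr (⌊b - p⌋ - ⌊a - p⌋) ?_
    rw [hαd, hβd]; push_cast; ring
  rw [abs_lt] at h
  unfold circ
  rcases lt_trichotomy α β with hlt | heq | hgt
  · have : Int.fract (β - α) = β - α := Int.fract_eq_self.2 ⟨by linarith, by linarith⟩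
    rw [key, this]
    exact ⟨fun _ => hlt, fun _ => ⟨by linarith, by linarith⟩⟩
  · have : Int.fract (β - α) = 0 := by rw [heq]; simp
    rw [key, this]
    constructor
    · intro hc; linarith [hc.1]
    · intro hc; exact absurd heq (ne_of_lt hc)
  · have h1 : Int.fract (β - α) = Int.fract (β - α + 1) := fract_congr (-1) (by push_cast; ring)
    have h2 : Int.fract (β - α + 1) = β - α + 1 := Int.fract_eq_self.2 ⟨by linarith, by linarith⟩
    rw [key, h1, h2]
    constructor
    · intro hc; linarith [hc.2]
    · intro hc; exact absurd hc (not_lt.2 (le_of_lt hgt))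

lemma circ_trans_out {pv a b c : ℚ} (ha : circ pv a) (hb : circ pv b) (hc : circ pv c)
    (hab : circ a b) (hbc : circ b c) : circ a c := by
  obtain ⟨ha1, ha2⟩ := ha; obtain ⟨hb1, hb2⟩ := hb; obtain ⟨hc1, hc2⟩ := hc
  have hab' := (circ_iff_lt (p := pv)
    (by rw [abs_lt]; constructor <;> linarith)).1 hab
  have hbc' := (circ_iff_lt (p := pv)
    (by rw [abs_lt]; constructor <;> linarith)).1 hbc
  exact (circ_iff_lt (p := pv) (by rw [abs_lt]; constructor <;> linarith)).2
    (hab'.trans hbc')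

lemma circ_trans_in {pv a b c : ℚ} (ha : circ a pv) (hb : circ b pv) (hc : circ c pv)
    (hab : circ a b) (hbc : circ b c) : circ a c := by
  obtain ⟨ha1, ha2⟩ := ha; obtain ⟨hb1, hb2⟩ := hb; obtain ⟨hc1, hc2⟩ := hc
  have hra := fract_rev ha1
  have hrb := fract_rev hb1
  have hrc := fract_rev hc1
  have hab' := (circ_iff_lt (p := pv)
    (by rw [abs_lt, hra, hrb]; constructor <;> linarith)).1 hab
  have hbc' := (circ_iff_lt (p := pv)
    (by rw [abs_lt, hrb, hrc]; constructor <;> linarith)).1 hbc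
  exact (circ_iff_lt (p := pv) (by rw [abs_lt, hra, hrc]; constructor <;> linarith)).2
    (hab'.trans hbc')

lemma exists_source {V : Type*} (A : V → V → Prop) (G : Finset V)
    (hirr : ∀ v, ¬ A v v)
    (htot : ∀ u ∈ G, ∀ v ∈ G, u ≠ v → A u v ∨ A v u)
    (htrans : ∀ x ∈ G, ∀ y ∈ G, ∀ z ∈ G, A x y → A y z → A x z)
    (hne : G.Nonempty) : ∃ s ∈ G, ∀ v ∈ G, v ≠ s → A s v := by
  classical
  obtain ⟨s, hs, hmax⟩ := G.exists_max_image (fun u => (G.filter (fun x => A u x)).card) hne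
  refine ⟨s, hs, fun v hv hvs => ?_⟩
  by_contra hns
  have hvs' : A v s := (htot s hs v hv (Ne.symm hvs)).resolve_left hns
  have hsub : G.filter (fun x => A s x) ⊂ G.filter (fun x => A v x) := by
    rw [Finset.ssubset_iff_of_subset]
    · exact ⟨s, Finset.mem_filter.2 ⟨hs, hvs'⟩, fun hmem => hirr s (Finset.mem_filter.1 hmem).2⟩
    · intro x hx
      obtain ⟨hxG, hsx⟩ := Finset.mem_filter.1 hx
      exact Finset.mem_filter.2 ⟨hxG, htrans v hv s hs x hxG hvs' hsx⟩
  have h1 := Finset.card_lt_card hsub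
  have h2 := hmax v hv
  omega

lemma build₁ (Pl Mi : Finset ℚ)
    (hPl : ∀ a ∈ Pl, 1/2 < Int.fract a ∧ Int.fract a < 1)
    (hMi : ∀ b ∈ Mi, 0 ≤ Int.fract b ∧ Int.fract b < 1/2) :
    ∃ x : ℚ, (∀ a ∈ Pl, circ x a) ∧ (∀ b ∈ Mi, circ b x) := by
  classical
  set G : Finset ℚ := Pl.image (fun a => 1 - Int.fract a) ∪
    Mi.image (fun b => 1/2 - Int.fract b) ∪ {(1:ℚ)/2} with hG
  have hhalf : (1:ℚ)/2 ∈ G := by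
    rw [hG]; exact Finset.mem_union_right _ (Finset.mem_singleton_self _)
  have hne : G.Nonempty := ⟨_, hhalf⟩
  have hpos : ∀ g ∈ G, 0 < g := by
    intro g hg
    rw [hG] at hg
    rcases Finset.mem_union.1 hg with hg' | hg'
    · rcases Finset.mem_union.1 hg' with hg'' | hg''
      · obtain ⟨a, ha, rfl⟩ := Finset.mem_image.1 hg''
        linarith [(hPl a ha).2]
      · obtain ⟨b, hb, rfl⟩ := Finset.mem_image.1 hg''
        linarith [(hMi b hb).2]
    · rw [Finset.mem_singleton.1 hg']; norm_num
  set ε := G.min' hne / 2 with hε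
  have hmpos : 0 < G.min' hne := hpos _ (G.min'_mem hne)
  have hε0 : 0 < ε := by rw [hε]; linarith
  have hεlt : ∀ g ∈ G, ε < g := fun g hg =>
    lt_of_lt_of_le (by rw [hε]; linarith) (G.min'_le g hg)
  have hεhalf : ε < 1/2 := hεlt _ hhalf
  refine ⟨1/2 - ε, fun a ha => ?_, fun b hb => ?_⟩
  · obtain ⟨h1, h2⟩ := hPl a ha
    have hbound : ε < 1 - Int.fract a := hεlt _ (by
      rw [hG]
      exact Finset.mem_union_left _ (Finset.mem_union_left _ (Finset.mem_image_of_mem _ ha)))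
    have hval : Int.fract (a - (1/2 - ε)) = Int.fract a - 1/2 + ε := by
      have heq : Int.fract (a - (1/2 - ε)) = Int.fract (Int.fract a - 1/2 + ε) :=
        fract_congr ⌊a⌋ (by rw [← Int.self_sub_floor a]; ring)
      rw [heq, Int.fract_eq_self.2 ⟨by linarith, by linarith⟩]
    exact ⟨by rw [hval]; linarith, by rw [hval]; linarith⟩
  · obtain ⟨h1, h2⟩ := hMi b hb
    have hbound : ε < 1/2 - Int.fract b := hεlt _ (by
      rw [hG]
      exact Finset.mem_union_left _ (Finset.mem_union_right _ (Finset.mem_image_of_mem _ hb)))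
    have hval : Int.fract (1/2 - ε - b) = 1/2 - ε - Int.fract b := by
      have heq : Int.fract (1/2 - ε - b) = Int.fract (1/2 - ε - Int.fract b) :=
        fract_congr (-⌊b⌋) (by rw [← Int.self_sub_floor b]; push_cast; ring)
      rw [heq, Int.fract_eq_self.2 ⟨by linarith, by linarith⟩]
    exact ⟨by rw [hval]; linarith, by rw [hval]; linarith⟩

lemma build₂ (Pl Mi : Finset ℚ)
    (hPl : ∀ a ∈ Pl, 0 ≤ Int.fract a ∧ Int.fract a < 1/2)
    (hMi : ∀ b ∈ Mi, 1/2 < Int.fract b ∧ Int.fract b < 1) :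
    ∃ x : ℚ, (∀ a ∈ Pl, circ x a) ∧ (∀ b ∈ Mi, circ b x) := by
  classical
  set G : Finset ℚ := Pl.image (fun a => 1/2 - Int.fract a) ∪
    Mi.image (fun b => 1 - Int.fract b) ∪ {(1:ℚ)/2} with hG
  have hhalf : (1:ℚ)/2 ∈ G := by
    rw [hG]; exact Finset.mem_union_right _ (Finset.mem_singleton_self _)
  have hne : G.Nonempty := ⟨_, hhalf⟩
  have hpos : ∀ g ∈ G, 0 < g := by
    intro g hg
    rw [hG] at hg
    rcases Finset.mem_union.1 hg with hg' | hg'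
    · rcases Finset.mem_union.1 hg' with hg'' | hg''
      · obtain ⟨a, ha, rfl⟩ := Finset.mem_image.1 hg''
        linarith [(hPl a ha).2]
      · obtain ⟨b, hb, rfl⟩ := Finset.mem_image.1 hg''
        linarith [(hMi b hb).2]
    · rw [Finset.mem_singleton.1 hg']; norm_num
  set ε := G.min' hne / 2 with hε
  have hmpos : 0 < G.min' hne := hpos _ (G.min'_mem hne)
  have hε0 : 0 < ε := by rw [hε]; linarith
  have hεlt : ∀ g ∈ G, ε < g := fun g hg =>
    lt_of_lt_of_le (by rw [hε]; linarith) (G.min'_le g hg)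
  have hεhalf : ε < 1/2 := hεlt _ hhalf
  refine ⟨-ε, fun a ha => ?_, fun b hb => ?_⟩
  · obtain ⟨h1, h2⟩ := hPl a ha
    have hbound : ε < 1/2 - Int.fract a := hεlt _ (by
      rw [hG]
      exact Finset.mem_union_left _ (Finset.mem_union_left _ (Finset.mem_image_of_mem _ ha)))
    have hval : Int.fract (a - -ε) = Int.fract a + ε := by
      have heq : Int.fract (a - -ε) = Int.fract (Int.fract a + ε) :=
        fract_congr ⌊a⌋ (by rw [← Int.self_sub_floor a]; ring)
      rw [heq, Int.fract_eq_self.2 ⟨by linarith, by linarith⟩]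
    exact ⟨by rw [hval]; linarith, by rw [hval]; linarith⟩
  · obtain ⟨h1, h2⟩ := hMi b hb
    have hbound : ε < 1 - Int.fract b := hεlt _ (by
      rw [hG]
      exact Finset.mem_union_left _ (Finset.mem_union_right _ (Finset.mem_image_of_mem _ hb)))
    have hval : Int.fract (-ε - b) = 1 - ε - Int.fract b := by
      have heq : Int.fract (-ε - b) = Int.fract (1 - ε - Int.fract b) :=
        fract_congr (-⌊b⌋ - 1) (by rw [← Int.self_sub_floor b]; push_cast; ring)
      rw [heq, Int.fract_eq_self.2 ⟨by linarith, by linarith⟩]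
    exact ⟨by rw [hval]; linarith, by rw [hval]; linarith⟩


lemma insertion {V : Type*} [DecidableEq V] (A : V → V → Prop)
    (hA : ∀ u v, A u v → ¬ A v u)
    (hlt1 : ∀ v x y z : V, A v x → A v y → A v z → A x y → A y z → A x z)
    (hlt2 : ∀ v x y z : V, A x v → A y v → A z v → A x y → A y z → A x z)
    (F' : Finset V) (w : V) (hw : w ∉ F')
    (htot : ∀ u ∈ insert w F', ∀ v ∈ insert w F', u ≠ v → A u v ∨ A v u)
    (p : V → ℚ)
    (hp : ∀ u ∈ F', ∀ v ∈ F', A u v ↔ circ (p u) (p v)) :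
    ∃ x : ℚ, ∀ v ∈ F', (A w v → circ x (p v)) ∧ (A v w → circ (p v) x) := by
  classical
  have hirr : ∀ v, ¬ A v v := fun v h => hA v v h h
  set Np := F'.filter (fun v => A w v) with hNp
  set Nm := F'.filter (fun v => A v w) with hNm
  have htotF' : ∀ u ∈ F', ∀ v ∈ F', u ≠ v → A u v ∨ A v u := fun u hu v hv h =>
    htot u (Finset.mem_insert_of_mem hu) v (Finset.mem_insert_of_mem hv) h
  have hNpF : ∀ v ∈ Np, v ∈ F' := fun v hv => (Finset.mem_filter.1 hv).1
  have hNmF : ∀ v ∈ Nm, v ∈ F' := fun v hv => (Finset.mem_filter.1 hv).1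
  have hNpw : ∀ v ∈ Np, A w v := fun v hv => (Finset.mem_filter.1 hv).2
  have hNmw : ∀ v ∈ Nm, A v w := fun v hv => (Finset.mem_filter.1 hv).2
  have hdisj : ∀ b ∈ Np, ∀ z ∈ Nm, b ≠ z := by
    intro b hb z hz he
    subst he
    exact hA w b (hNpw b hb) (hNmw b hz)
  suffices h : ∃ x, (∀ a ∈ Np, circ x (p a)) ∧ (∀ b ∈ Nm, circ (p b) x) by
    obtain ⟨x, h1, h2⟩ := h
    exact ⟨x, fun v hv => ⟨fun hwv => h1 v (Finset.mem_filter.2 ⟨hv, hwv⟩),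
      fun hvw => h2 v (Finset.mem_filter.2 ⟨hv, hvw⟩)⟩⟩
  have hNmtot : ∀ u ∈ Nm, ∀ v ∈ Nm, u ≠ v → A u v ∨ A v u := fun u hu v hv h =>
    htotF' u (hNmF u hu) v (hNmF v hv) h
  have hNmtrans : ∀ x ∈ Nm, ∀ y ∈ Nm, ∀ z ∈ Nm, A x y → A y z → A x z :=
    fun x hx y hy z hz hxy hyz =>
      hlt2 w x y z (hNmw x hx) (hNmw y hy) (hNmw z hz) hxy hyz
  by_cases hPe : Np = ∅
  · by_cases hMe : Nm = ∅
    · exact ⟨0, by simp [hPe], by simp [hMe]⟩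
    · obtain ⟨z₀, hz₀Nm, hz₀s⟩ := exists_source A Nm hirr hNmtot hNmtrans
        (Finset.nonempty_of_ne_empty hMe)
      obtain ⟨x, hx1, hx2⟩ := build₁ ∅ (Nm.image fun v => p v - p z₀) (by simp) (by
        intro b hb
        obtain ⟨v, hv, rfl⟩ := Finset.mem_image.1 hb
        rcases eq_or_ne v z₀ with rfl | hne
        · rw [sub_self, Int.fract_zero]; norm_num
        · have hc := (hp z₀ (hNmF z₀ hz₀Nm) v (hNmF v hv)).1 (hz₀s v hv hne)
          exact ⟨le_of_lt hc.1, hc.2⟩)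
      refine ⟨x + p z₀, by simp [hPe], fun b hb => ?_⟩
      have := (circ_shift (p z₀)).2 (hx2 _ (Finset.mem_image_of_mem _ hb))
      simpa using this
  · have hNptot : ∀ u ∈ Np, ∀ v ∈ Np, u ≠ v → A u v ∨ A v u := fun u hu v hv h =>
      htotF' u (hNpF u hu) v (hNpF v hv) h
    have hNptrans : ∀ x ∈ Np, ∀ y ∈ Np, ∀ z ∈ Np, A x y → A y z → A x z :=
      fun x hx y hy z hz hxy hyz =>
        hlt1 w x y z (hNpw x hx) (hNpw y hy) (hNpw z hz) hxy hyz
    obtain ⟨s, hsNp, hs⟩ := exists_source A Np hirr hNptot hNptrans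
      (Finset.nonempty_of_ne_empty hPe)
    have hws : A w s := hNpw s hsNp
    by_cases hZ : ∃ z ∈ Nm, A s z
    · have hMne : Nm.Nonempty := let ⟨z, hz, _⟩ := hZ; ⟨z, hz⟩
      obtain ⟨z₀, hz₀Nm, hz₀s⟩ := exists_source A Nm hirr hNmtot hNmtrans hMne
      have hz₀w : A z₀ w := hNmw z₀ hz₀Nm
      have hsz₀ : A s z₀ := by
        by_contra hns
        obtain ⟨z, hzNm, hsz⟩ := hZ
        have hzz : z ≠ z₀ := fun he => hns (he ▸ hsz)
        have h1 : A z₀ z := hz₀s z hzNm hzz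
        have h2 : A z₀ s := by
          refine (htotF' z₀ (hNmF z₀ hz₀Nm) s (hNpF s hsNp)
            (Ne.symm (hdisj s hsNp z₀ hz₀Nm))).resolve_right hns
        have hzw : A z w := hNmw z hzNm
        exact hA w s hws (hlt1 z₀ s z w h2 h1 hz₀w hsz hzw)
      have hbz : ∀ b ∈ Np, A b z₀ := by
        intro b hb
        by_contra hnb
        have hbne : b ≠ z₀ := hdisj b hb z₀ hz₀Nm
        have h1 : A z₀ b := (htotF' b (hNpF b hb) z₀ (hNmF z₀ hz₀Nm) hbne).resolve_left hnb
        have hwb : A w b := hNpw b hb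
        have hsb : A s b := by
          rcases eq_or_ne b s with rfl | hbs
          · exact absurd hsz₀ hnb
          · exact hs b hb hbs
        exact hA z₀ w hz₀w (hlt2 b w s z₀ hwb hsb h1 hws hsz₀)
      obtain ⟨x, hx1, hx2⟩ := build₁ (Np.image fun v => p v - p z₀)
        (Nm.image fun v => p v - p z₀)
        (by
          intro a ha
          obtain ⟨b, hb, rfl⟩ := Finset.mem_image.1 ha
          have hc := (hp b (hNpF b hb) z₀ (hNmF z₀ hz₀Nm)).1 (hbz b hb)
          rw [fract_rev hc.1]
          exact ⟨by linarith [hc.2], by linarith [hc.1]⟩)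
        (by
          intro b hb
          obtain ⟨v, hv, rfl⟩ := Finset.mem_image.1 hb
          rcases eq_or_ne v z₀ with rfl | hne
          · rw [sub_self, Int.fract_zero]; norm_num
          · have hc := (hp z₀ (hNmF z₀ hz₀Nm) v (hNmF v hv)).1 (hz₀s v hv hne)
            exact ⟨le_of_lt hc.1, hc.2⟩)
      refine ⟨x + p z₀, fun a ha => ?_, fun b hb => ?_⟩
      · have := (circ_shift (p z₀)).2 (hx1 _ (Finset.mem_image_of_mem _ ha))
        simpa using this
      · have := (circ_shift (p z₀)).2 (hx2 _ (Finset.mem_image_of_mem _ hb))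
        simpa using this
    · have hzs : ∀ z ∈ Nm, A z s := by
        intro z hz
        have hne : z ≠ s := Ne.symm (hdisj s hsNp z hz)
        exact (htotF' z (hNmF z hz) s (hNpF s hsNp) hne).resolve_right
          (fun h => hZ ⟨z, hz, h⟩)
      obtain ⟨x, hx1, hx2⟩ := build₂ (Np.image fun v => p v - p s)
        (Nm.image fun v => p v - p s)
        (by
          intro a ha
          obtain ⟨b, hb, rfl⟩ := Finset.mem_image.1 ha
          rcases eq_or_ne b s with rfl | hne
          · rw [sub_self, Int.fract_zero]; norm_num
          · have hc := (hp s (hNpF s hsNp) b (hNpF b hb)).1 (hs b hb hne)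
            exact ⟨le_of_lt hc.1, hc.2⟩)
        (by
          intro b hb
          obtain ⟨v, hv, rfl⟩ := Finset.mem_image.1 hb
          have hc := (hp v (hNmF v hv) s (hNpF s hsNp)).1 (hzs v hv)
          rw [fract_rev hc.1]
          exact ⟨by linarith [hc.2], by linarith [hc.1]⟩)
      refine ⟨x + p s, fun a ha => ?_, fun b hb => ?_⟩
      · have := (circ_shift (p s)).2 (hx1 _ (Finset.mem_image_of_mem _ ha))
        simpa using this
      · have := (circ_shift (p s)).2 (hx2 _ (Finset.mem_image_of_mem _ hb))
        simpa using this

lemma rep_exists {V : Type*} (A : V → V → Prop)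
    (hA : ∀ u v, A u v → ¬ A v u)
    (hlt1 : ∀ v x y z : V, A v x → A v y → A v z → A x y → A y z → A x z)
    (hlt2 : ∀ v x y z : V, A x v → A y v → A z v → A x y → A y z → A x z)
    (F : Finset V)
    (htot : ∀ u ∈ F, ∀ v ∈ F, u ≠ v → A u v ∨ A v u) :
    ∃ p : V → ℚ, ∀ u ∈ F, ∀ v ∈ F, (A u v ↔ circ (p u) (p v)) := by
  classical
  revert htot
  induction F using Finset.induction_on with
  | empty => exact fun _ => ⟨fun _ => 0, by simp⟩
  | @insert w F' hw ih =>
    intro htot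
    obtain ⟨p, hp⟩ := ih (fun u hu v hv hne =>
      htot u (Finset.mem_insert_of_mem hu) v (Finset.mem_insert_of_mem hv) hne)
    obtain ⟨x, hx⟩ := insertion A hA hlt1 hlt2 F' w hw htot p hp
    refine ⟨Function.update p w x, ?_⟩
    have hupd : ∀ z ∈ F', Function.update p w x z = p z := fun z hz =>
      Function.update_of_ne (by rintro rfl; exact hw hz) _ _
    intro u hu v hv
    rcases Finset.mem_insert.1 hu with rfl | hu' <;> rcases Finset.mem_insert.1 hv with he | hv'
    · rw [he, Function.update_self]
      exact ⟨fun h => absurd h (fun h' => hA _ _ h' h'), fun h => absurd h (circ_irrefl x)⟩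
    · rw [Function.update_self, hupd v hv']
      constructor
      · exact fun h => (hx v hv').1 h
      · intro hc
        by_contra hna
        have hvw : A v u := (htot u (Finset.mem_insert_self _ _) v
          (Finset.mem_insert_of_mem hv') (by rintro rfl; exact hw hv')).resolve_left hna
        exact circ_asymm hc ((hx v hv').2 hvw)
    · rw [he, Function.update_self, hupd u hu']
      constructor
      · exact fun h => (hx u hu').2 h
      · intro hc
        by_contra hna
        have huw : A w u := (htot w (Finset.mem_insert_self _ _) u
          (Finset.mem_insert_of_mem hu') (by rintro rfl; exact hw hu')).resolve_right hna
        exact circ_asymm hc ((hx u hu').1 huw)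
    · rw [hupd u hu', hupd v hv']
      exact hp u hu' v hv'

end Stmt13Aux

/-- If the arcs of a partially oriented complete graph induce
two vertex-disjoint locally transitive tournaments covering all the vertices
(one on `S`, one on its complement), with no arc between them, then the graph
can be completed to a locally transitive tournament. -/
theorem stmt_13 {V : Type*} [Fintype V] (A : V → V → Prop) (S : Set V)
    (hA : IsOrientedGraph A)
    (hsep : ∀ u v : V, A u v → (u ∈ S ↔ v ∈ S))
    (htour₁ : ∀ u ∈ S, ∀ v ∈ S, u ≠ v → A u v ∨ A v u)
    (htour₂ : ∀ u ∈ Sᶜ, ∀ v ∈ Sᶜ, u ≠ v → A u v ∨ A v u)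
    (hlt : IsLocallyTransitive A) :
    ∃ T : V → V → Prop, CompletesToTournament A T ∧ IsLocallyTransitive T := by
  classical
  obtain ⟨hlt1, hlt2⟩ := hlt
  set FS : Finset V := Finset.univ.filter (fun v => v ∈ S) with hFS
  set FC : Finset V := Finset.univ.filter (fun v => v ∉ S) with hFC
  have hmemFS : ∀ v, v ∈ S → v ∈ FS := fun v hv =>
    Finset.mem_filter.2 ⟨Finset.mem_univ _, hv⟩
  have hmemFC : ∀ v, v ∉ S → v ∈ FC := fun v hv =>
    Finset.mem_filter.2 ⟨Finset.mem_univ _, hv⟩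
  obtain ⟨p, hp⟩ := Stmt13Aux.rep_exists A hA hlt1 hlt2 FS (fun u hu v hv hne =>
    htour₁ u (Finset.mem_filter.1 hu).2 v (Finset.mem_filter.1 hv).2 hne)
  obtain ⟨q, hq⟩ := Stmt13Aux.rep_exists A hA hlt1 hlt2 FC (fun u hu v hv hne =>
    htour₂ u (Finset.mem_filter.1 hu).2 v (Finset.mem_filter.1 hv).2 hne)
  set B : Finset ℚ := (FS ×ˢ FC).image (fun uv => Int.fract (p uv.1 - q uv.2)) ∪
    (FS ×ˢ FC).image (fun uv => Int.fract (p uv.1 - q uv.2 + 1/2)) with hB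
  obtain ⟨ε, hεmem, hεB⟩ := (Set.Ioo_infinite (show (0:ℚ) < 1 by norm_num)).exists_notMem_finset B
  obtain ⟨hε0, hε1⟩ := hεmem
  set P : V → ℚ := fun v => if v ∈ S then p v else q v + ε with hP
  have hPS : ∀ v ∈ S, P v = p v := fun v hv => by simp [hP, hv]
  have hPC : ∀ v, v ∉ S → P v = q v + ε := fun v hv => by simp [hP, hv]
  have hεf : Int.fract ε = ε := Int.fract_eq_self.2 ⟨le_of_lt hε0, hε1⟩
  have hcross : ∀ u ∈ S, ∀ v, v ∉ S →
      Int.fract (P v - P u) ≠ 0 ∧ Int.fract (P v - P u) ≠ 1/2 := by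
    intro u hu v hv
    rw [hPS u hu, hPC v hv]
    constructor
    · intro h0
      have hsf := Int.self_sub_floor (q v + ε - p u)
      rw [h0] at hsf
      have hfe : Int.fract ε = Int.fract (p u - q v) :=
        Stmt13Aux.fract_congr ⌊q v + ε - p u⌋ (by linarith)
      refine hεB ?_
      rw [hB]
      refine Finset.mem_union_left _ (Finset.mem_image.2 ⟨(u, v), ?_, ?_⟩)
      · exact Finset.mem_product.2 ⟨hmemFS u hu, hmemFC v hv⟩
      · rw [← hfe, hεf]
    · intro h0
      have hsf := Int.self_sub_floor (q v + ε - p u)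
      rw [h0] at hsf
      have hfe : Int.fract ε = Int.fract (p u - q v + 1/2) :=
        Stmt13Aux.fract_congr ⌊q v + ε - p u⌋ (by linarith)
      refine hεB ?_
      rw [hB]
      refine Finset.mem_union_right _ (Finset.mem_image.2 ⟨(u, v), ?_, ?_⟩)
      · exact Finset.mem_product.2 ⟨hmemFS u hu, hmemFC v hv⟩
      · rw [← hfe, hεf]
  have hsub : ∀ u v, A u v → Stmt13Aux.circ (P u) (P v) := by
    intro u v h
    have hiff := hsep u v h
    by_cases hu : u ∈ S
    · have hv : v ∈ S := hiff.1 hu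
      rw [hPS u hu, hPS v hv]
      exact (hp u (hmemFS u hu) v (hmemFS v hv)).1 h
    · have hv : v ∉ S := fun hv => hu (hiff.2 hv)
      rw [hPC u hu, hPC v hv]
      exact (Stmt13Aux.circ_shift ε).2 ((hq u (hmemFC u hu) v (hmemFC v hv)).1 h)
  refine ⟨fun u v => Stmt13Aux.circ (P u) (P v), ⟨hsub, ?_, ?_, ?_⟩, ?_, ?_⟩
  · exact fun u v hT hAvu => Stmt13Aux.circ_asymm hT (hsub v u hAvu)
  · exact fun u v h h' => Stmt13Aux.circ_asymm h h'
  · intro u v hne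
    by_cases hu : u ∈ S <;> by_cases hv : v ∈ S
    · exact (htour₁ u hu v hv hne).imp (hsub u v) (hsub v u)
    · obtain ⟨h1, h2⟩ := hcross u hu v hv
      exact Stmt13Aux.circ_total h1 h2
    · obtain ⟨h1, h2⟩ := hcross v hv u hu
      exact (Stmt13Aux.circ_total h1 h2).symm
    · exact (htour₂ u hu v hv hne).imp (hsub u v) (hsub v u)
  · exact fun v x y z h1 h2 h3 h4 h5 => Stmt13Aux.circ_trans_out h1 h2 h3 h4 h5
  · exact fun v x y z h1 h2 h3 h4 h5 => Stmt13Aux.circ_trans_in h1 h2 h3 h4 h5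
end

section
/- A friendly partially oriented complete graph P can be completed to a locally transitive tournament if and only if no directed triangle of P is contained in the in-neighbourhood or the out-neighbourhood of any vertex of P. -/
section StmtFourteenProof

private lemma fract_shift' (a b : ℚ) :
    Int.fract (a + b) = Int.fract (Int.fract a + b) := by
  conv_lhs => rw [show a + b = Int.fract a + b + (⌊a⌋ : ℚ) by
    rw [add_right_comm, Int.fract_add_floor]]
  rw [Int.fract_add_intCast]

private lemma fract_sub_fract' (x y : ℚ) :
    Int.fract (x - y) = Int.fract (Int.fract x - Int.fract y) := by
  have h : x - y = (Int.fract x - Int.fract y) + ((⌊x⌋ - ⌊y⌋ : ℤ) : ℚ) := by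
    push_cast
    linear_combination (Int.fract_add_floor y) - (Int.fract_add_floor x)
  rw [h, Int.fract_add_intCast]

private lemma half_lt' {a b : ℚ} (ha : 0 < a ∧ a < 1/2) (hb : 0 < b ∧ b < 1/2)
    (h : 0 < Int.fract (b - a) ∧ Int.fract (b - a) < 1/2) : a < b := by
  rcases lt_trichotomy a b with h' | h' | h'
  · exact h'
  · exfalso; rw [h', sub_self, Int.fract_zero] at h; exact lt_irrefl 0 h.1
  · exfalso
    have h1 : Int.fract (b - a) = b - a + 1 := by
      rw [← Int.fract_add_one, Int.fract_eq_self.2 ⟨by linarith, by linarith⟩]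
    rw [h1] at h
    linarith [h.2]

private lemma exists_source' {α : Type*} (R : α → α → Prop) (s : Finset α)
    (htot : ∀ x ∈ s, ∀ y ∈ s, x ≠ y → R x y ∨ R y x)
    (htr : ∀ x ∈ s, ∀ y ∈ s, ∀ z ∈ s, R x y → R y z → R x z)
    (hs : s.Nonempty) : ∃ u ∈ s, ∀ x ∈ s, x ≠ u → R u x := by
  classical
  induction s using Finset.induction_on with
  | empty => simp at hs
  | @insert a s' ha ih =>
    by_cases hs' : s'.Nonempty
    · have hsub : ∀ x ∈ s', x ∈ insert a s' := fun x hx => Finset.mem_insert_of_mem hx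
      obtain ⟨u', hu's, hu'⟩ := ih
        (fun x hx y hy => htot x (hsub x hx) y (hsub y hy))
        (fun x hx y hy z hz => htr x (hsub x hx) y (hsub y hy) z (hsub z hz)) hs'
      have hau' : a ≠ u' := fun h => ha (h ▸ hu's)
      rcases htot a (Finset.mem_insert_self a s') u' (hsub u' hu's) hau' with h | h
      · refine ⟨a, Finset.mem_insert_self a s', fun x hx hxa => ?_⟩
        rcases Finset.mem_insert.1 hx with rfl | hx'
        · exact absurd rfl hxa
        · by_cases hxu : x = u'
          · exact hxu ▸ h
          · exact htr a (Finset.mem_insert_self a s') u' (hsub u' hu's) x (hsub x hx') h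
              (hu' x hx' hxu)
      · refine ⟨u', hsub u' hu's, fun x hx hxu => ?_⟩
        rcases Finset.mem_insert.1 hx with rfl | hx'
        · exact h
        · exact hu' x hx' hxu
    · rw [Finset.not_nonempty_iff_eq_empty] at hs'
      subst hs'
      exact ⟨a, Finset.mem_insert_self a _, by simp⟩

private lemma aux_adj_swap' {V : Type*} {x y : EdgePair (⊤ : SimpleGraph V)}
    (h : (auxGraph (⊤ : SimpleGraph V)).Adj x y) :
    x.1.1 = y.1.2 ∧ x.1.2 = y.1.1 := by
  rw [auxGraph, SimpleGraph.fromRel_adj] at h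
  obtain ⟨hne, h | h⟩ := h
  · rcases h with ⟨h1, h2⟩ | ⟨h1, h2⟩ | h
    · rw [SimpleGraph.top_adj, not_ne_iff] at h2
      exact absurd (Subtype.ext (Prod.ext h1 h2)) hne
    · rw [SimpleGraph.top_adj, not_ne_iff] at h1
      exact absurd (Subtype.ext (Prod.ext h1 h2)) hne
    · exact h
  · rcases h with ⟨h1, h2⟩ | ⟨h1, h2⟩ | h
    · rw [SimpleGraph.top_adj, not_ne_iff] at h2
      exact absurd (Subtype.ext (Prod.ext h1.symm h2.symm)) hne
    · rw [SimpleGraph.top_adj, not_ne_iff] at h1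
      exact absurd (Subtype.ext (Prod.ext h1.symm h2.symm)) hne
    · exact ⟨h.2.symm, h.1.symm⟩

private lemma aux_reach' {V : Type*} {x y : EdgePair (⊤ : SimpleGraph V)}
    (h : (auxGraph (⊤ : SimpleGraph V)).Reachable x y) :
    x = y ∨ (x.1.1 = y.1.2 ∧ x.1.2 = y.1.1) := by
  obtain ⟨w⟩ := h
  induction w with
  | nil => exact Or.inl rfl
  | cons hadj p ih =>
    have hs := aux_adj_swap' hadj
    rcases ih with rfl | ⟨h1, h2⟩
    · exact Or.inr hs
    · exact Or.inl (Subtype.ext (Prod.ext (hs.1.trans h2) (hs.2.trans h1)))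

private def GoodArcs {V : Type*} (A : V → V → Prop) : Prop :=
  (∀ u v, A u v → ¬ A v u) ∧
  (∀ u v w, u ≠ w → (A u v ∨ A v u) → (A v w ∨ A w v) → (A u w ∨ A w u)) ∧
  (∀ v x y z, A v x → A v y → A v z → A x y → A y z → A x z) ∧
  (∀ v x y z, A x v → A y v → A z v → A x y → A y z → A x z)

private def GoodRep {V : Type*} (A : V → V → Prop) (θ : V → ℚ) : Prop :=
  (∀ u v, A u v → 0 < Int.fract (θ v - θ u) ∧ Int.fract (θ v - θ u) < 1/2) ∧
  (∀ u v, u ≠ v → Int.fract (θ v - θ u) ≠ 0 ∧ Int.fract (θ v - θ u) ≠ 1/2)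

private lemma insertion' {W : Type*} [Fintype W] (g : W → ℚ) (P N : W → Prop) (c : ℚ)
    (hP : ∀ x, P x → Int.fract (g x - c) < 1/2)
    (hN : ∀ x, N x → 1/2 ≤ Int.fract (g x - c)) :
    ∃ p : ℚ, ∀ x,
      (P x → 0 < Int.fract (g x - p) ∧ Int.fract (g x - p) < 1/2) ∧
      (N x → 1/2 < Int.fract (g x - p) ∧ Int.fract (g x - p) < 1) ∧
      Int.fract (g x - p) ≠ 0 ∧ Int.fract (g x - p) ≠ 1/2 := by
  classical
  have hSne : (insert ((1:ℚ)/2) (Finset.univ.image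
      (fun x : W => min (1 - Int.fract (g x - c))
        (if P x then 1/2 - Int.fract (g x - c) else 1)))).Nonempty :=
    ⟨1/2, Finset.mem_insert_self _ _⟩
  have hε₀pos : 0 < Finset.min' _ hSne := by
    rw [Finset.lt_min'_iff]
    intro b hb
    rw [Finset.mem_insert] at hb
    rcases hb with rfl | hb
    · norm_num
    · obtain ⟨x, -, rfl⟩ := Finset.mem_image.1 hb
      apply lt_min
      · have := Int.fract_lt_one (g x - c)
        linarith
      · split
        · have := hP x ‹_›
          linarith
        · norm_num
  obtain ⟨ε, hεIoo, hεBad⟩ := (Set.Ioo_infinite hε₀pos).exists_notMem_finset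
      (Finset.univ.image (fun x : W => 1/2 - Int.fract (g x - c)))
  obtain ⟨hε0, hεlt⟩ := hεIoo
  have hle : ∀ x : W, ε < min (1 - Int.fract (g x - c))
      (if P x then 1/2 - Int.fract (g x - c) else 1) := fun x =>
    lt_of_lt_of_le hεlt (Finset.min'_le _ _
      (Finset.mem_insert_of_mem (Finset.mem_image_of_mem _ (Finset.mem_univ x))))
  refine ⟨c - ε, fun x => ?_⟩
  have hFx0 : 0 ≤ Int.fract (g x - c) := Int.fract_nonneg _
  have hlt1 : ε < 1 - Int.fract (g x - c) := lt_of_lt_of_le (hle x) (min_le_left _ _)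
  have hkey : Int.fract (g x - (c - ε)) = Int.fract (g x - c) + ε := by
    rw [show g x - (c - ε) = (g x - c) + ε by ring, fract_shift']
    exact Int.fract_eq_self.2 ⟨by linarith, by linarith⟩
  rw [hkey]
  have hne_half : Int.fract (g x - c) + ε ≠ 1/2 := by
    intro hh
    exact hεBad (Finset.mem_image.2 ⟨x, Finset.mem_univ x, by linarith⟩)
  refine ⟨fun hPx => ?_, fun hNx => ?_, by linarith, hne_half⟩
  · have := lt_of_lt_of_le (hle x) (min_le_right _ _)
    rw [if_pos hPx] at this
    exact ⟨by linarith, by linarith⟩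
  · have := hN x hNx
    exact ⟨by linarith, by linarith⟩

private lemma main_rep : ∀ (n : ℕ) (V : Type*) [Fintype V] (A : V → V → Prop),
    Fintype.card V ≤ n → GoodArcs A → ∃ θ : V → ℚ, GoodRep A θ := by
  intro n
  induction n with
  | zero =>
    intro V _ A hcard _
    have hE : IsEmpty V := Fintype.card_eq_zero_iff.1 (Nat.le_zero.1 hcard)
    exact ⟨fun _ => 0, fun u _ _ => (hE.false u).elim, fun u _ _ => (hE.false u).elim⟩
  | succ n ih =>
    intro V _ A hcard hG
    classical
    cases isEmpty_or_nonempty V with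
    | inl hE =>
      exact ⟨fun _ => 0, fun u _ _ => (hE.false u).elim, fun u _ _ => (hE.false u).elim⟩
    | inr hne =>
      obtain ⟨v⟩ := hne
      obtain ⟨hasym, hclq, hto, hti⟩ := hG
      have hcard' : Fintype.card {u : V // u ≠ v} ≤ n := by
        have h1 : Fintype.card {u : V // ¬ u = v} = Fintype.card V - Fintype.card {u : V // u = v} :=
          Fintype.card_subtype_compl (fun u : V => u = v)
        have h2 : Fintype.card {u : V // u = v} = 1 := Fintype.card_subtype_eq v
        have h3 : 1 ≤ Fintype.card V := Fintype.card_pos_iff.2 ⟨v⟩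
        have : Fintype.card {u : V // u ≠ v} = Fintype.card V - 1 := by
          rw [← h2, ← h1]
        omega
      obtain ⟨θ', hrep, hgen⟩ := ih {u : V // u ≠ v} (fun a b => A a.1 b.1) hcard'
        ⟨fun a b h => hasym a.1 b.1 h,
         fun a b c hac h1 h2 => hclq a.1 b.1 c.1 (fun h => hac (Subtype.ext h)) h1 h2,
         fun a b c d h1 h2 h3 h4 h5 => hto a.1 b.1 c.1 d.1 h1 h2 h3 h4 h5,
         fun a b c d h1 h2 h3 h4 h5 => hti a.1 b.1 c.1 d.1 h1 h2 h3 h4 h5⟩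
      set sP : Finset {u : V // u ≠ v} := Finset.univ.filter (fun x => A v x.1) with hsP
      set sN : Finset {u : V // u ≠ v} := Finset.univ.filter (fun x => A x.1 v) with hsN
      have memP : ∀ x : {u : V // u ≠ v}, x ∈ sP ↔ A v x.1 := by
        intro x; simp [hsP]
      have memN : ∀ x : {u : V // u ≠ v}, x ∈ sN ↔ A x.1 v := by
        intro x; simp [hsN]
      have sourceP : sP.Nonempty → ∃ u ∈ sP, ∀ x ∈ sP, x ≠ u → A u.1 x.1 := by
        intro h
        refine exists_source' (fun a b : {u : V // u ≠ v} => A a.1 b.1) sP ?_ ?_ h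
        · intro x hx y hy hxy
          exact hclq x.1 v y.1 (fun h' => hxy (Subtype.ext h'))
            (Or.inr ((memP x).1 hx)) (Or.inl ((memP y).1 hy))
        · intro x hx y hy z hz h1 h2
          exact hto v x.1 y.1 z.1 ((memP x).1 hx) ((memP y).1 hy) ((memP z).1 hz) h1 h2
      have sourceN : sN.Nonempty → ∃ u ∈ sN, ∀ x ∈ sN, x ≠ u → A u.1 x.1 := by
        intro h
        refine exists_source' (fun a b : {u : V // u ≠ v} => A a.1 b.1) sN ?_ ?_ h
        · intro x hx y hy hxy
          exact hclq x.1 v y.1 (fun h' => hxy (Subtype.ext h'))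
            (Or.inl ((memN x).1 hx)) (Or.inr ((memN y).1 hy))
        · intro x hx y hy z hz h1 h2
          exact hti v x.1 y.1 z.1 ((memN x).1 hx) ((memN y).1 hy) ((memN z).1 hz) h1 h2
      -- case B: insert just before the source of N⁺(v)
      have caseB : ∀ u₁ : {u : V // u ≠ v}, u₁ ∈ sP →
          (∀ x ∈ sP, x ≠ u₁ → A u₁.1 x.1) →
          (∀ w : {u : V // u ≠ v}, A w.1 v → A w.1 u₁.1) →
          ∃ c : ℚ, (∀ x : {u : V // u ≠ v}, A v x.1 → Int.fract (θ' x - c) < 1/2) ∧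
            (∀ x : {u : V // u ≠ v}, A x.1 v → 1/2 ≤ Int.fract (θ' x - c)) := by
        intro u₁ hu₁s hu₁ hb
        refine ⟨θ' u₁, fun x hx => ?_, fun x hx => ?_⟩
        · by_cases hxu : x = u₁
          · subst hxu; rw [sub_self, Int.fract_zero]; norm_num
          · exact (hrep u₁ x (hu₁ x ((memP x).2 hx) hxu)).2
        · have h1 := hrep x u₁ (hb x hx)
          have h0 : Int.fract (θ' u₁ - θ' x) ≠ 0 := ne_of_gt h1.1
          have h2 := Int.fract_neg h0
          rw [neg_sub] at h2
          rw [h2]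
          linarith [h1.2]
      -- case C: insert just before the antipode of the source of N⁻(v)
      have caseC : ∀ u₂ : {u : V // u ≠ v}, u₂ ∈ sN →
          (∀ x ∈ sN, x ≠ u₂ → A u₂.1 x.1) →
          (∀ x : {u : V // u ≠ v}, A v x.1 → A x.1 u₂.1) →
          ∃ c : ℚ, (∀ x : {u : V // u ≠ v}, A v x.1 → Int.fract (θ' x - c) < 1/2) ∧
            (∀ x : {u : V // u ≠ v}, A x.1 v → 1/2 ≤ Int.fract (θ' x - c)) := by
        intro u₂ hu₂s hu₂ hb2
        refine ⟨θ' u₂ + 1/2, fun x hx => ?_, fun x hx => ?_⟩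
        · have h1 := hrep x u₂ (hb2 x hx)
          have h0 : Int.fract (θ' u₂ - θ' x) ≠ 0 := ne_of_gt h1.1
          have h2 := Int.fract_neg h0
          rw [neg_sub] at h2
          rw [show θ' x - (θ' u₂ + 1/2) = (θ' x - θ' u₂) + (-(1/2)) by ring,
            fract_shift', h2,
            show 1 - Int.fract (θ' u₂ - θ' x) + -(1/2) = 1/2 - Int.fract (θ' u₂ - θ' x) by ring,
            Int.fract_eq_self.2 ⟨by linarith [h1.2], by linarith [h1.1]⟩]
          linarith [h1.1]
        · by_cases hxu : x = u₂
          · subst hxu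
            rw [show θ' x - (θ' x + 1/2) = -(1/2) by ring]
            rw [Int.fract_neg (by rw [Int.fract_eq_self.2 (by norm_num)]; norm_num),
              Int.fract_eq_self.2 (by norm_num)]
            norm_num
          · have h1 := hrep u₂ x (hu₂ x ((memN x).2 hx) hxu)
            rw [show θ' x - (θ' u₂ + 1/2) = (θ' x - θ' u₂) + (-(1/2)) by ring,
              fract_shift',
              show Int.fract (θ' x - θ' u₂) + -(1/2) = Int.fract (θ' x - θ' u₂) - 1/2 by ring,
              ← Int.fract_add_one,
              Int.fract_eq_self.2 ⟨by linarith [h1.1], by linarith [h1.2]⟩]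
            linarith [h1.1]
      have hkeyc : ∃ c : ℚ,
          (∀ x : {u : V // u ≠ v}, A v x.1 → Int.fract (θ' x - c) < 1/2) ∧
          (∀ x : {u : V // u ≠ v}, A x.1 v → 1/2 ≤ Int.fract (θ' x - c)) := by
        by_cases hPne : sP.Nonempty
        · obtain ⟨u₁, hu₁s, hu₁⟩ := sourceP hPne
          by_cases hb : ∀ w : {u : V // u ≠ v}, A w.1 v → A w.1 u₁.1
          · exact caseB u₁ hu₁s hu₁ hb
          · push_neg at hb
            obtain ⟨w₀, hw₀v, hw₀u₁⟩ := hb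
            obtain ⟨u₂, hu₂s, hu₂⟩ := sourceN ⟨w₀, (memN w₀).2 hw₀v⟩
            have hvu₁ : A v u₁.1 := (memP u₁).1 hu₁s
            have hu₂v : A u₂.1 v := (memN u₂).1 hu₂s
            have hb2 : ∀ x : {u : V // u ≠ v}, A v x.1 → A x.1 u₂.1 := by
              by_contra hc
              push_neg at hc
              obtain ⟨x₀, hvx₀, hx₀u₂⟩ := hc
              -- upgrade the two failures to reversed arcs
              have hu₁w₀ : A u₁.1 w₀.1 := by
                have hne' : w₀.1 ≠ u₁.1 := by
                  intro h
                  exact hasym v u₁.1 hvu₁ (h ▸ hw₀v)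
                rcases hclq w₀.1 v u₁.1 hne' (Or.inl hw₀v) (Or.inl hvu₁) with h | h
                · exact absurd h hw₀u₁
                · exact h
              have hu₂x₀ : A u₂.1 x₀.1 := by
                have hne' : x₀.1 ≠ u₂.1 := by
                  intro h
                  exact hasym v x₀.1 hvx₀ (h ▸ hu₂v)
                rcases hclq x₀.1 v u₂.1 hne' (Or.inr hvx₀) (Or.inr hu₂v) with h | h
                · exact absurd h hx₀u₂
                · exact h
              have hwx : A w₀.1 x₀.1 := by
                by_cases hwu : w₀ = u₂
                · exact hwu ▸ hu₂x₀
                · exact hto u₂.1 w₀.1 v x₀.1 (hu₂ w₀ ((memN w₀).2 hw₀v) hwu) hu₂v hu₂x₀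
                    hw₀v hvx₀
              have hne12 : u₁.1 ≠ u₂.1 := by
                intro h
                exact hasym v u₁.1 hvu₁ (h ▸ hu₂v)
              rcases hclq u₁.1 v u₂.1 hne12 (Or.inr hvu₁) (Or.inr hu₂v) with h12 | h21
              · -- A u₁ u₂ : use in-transitivity at x₀
                have hx₀ne : x₀ ≠ u₁ := by
                  intro h
                  exact hasym u₁.1 u₂.1 h12 (h ▸ hu₂x₀)
                have hu₁x₀ : A u₁.1 x₀.1 := hu₁ x₀ ((memP x₀).2 hvx₀) hx₀ne
                exact hasym v u₁.1 hvu₁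
                  (hti x₀.1 u₁.1 w₀.1 v hu₁x₀ hwx hvx₀ hu₁w₀ hw₀v)
              · -- A u₂ u₁ : use out-transitivity at u₂
                have hw₀ne : w₀ ≠ u₂ := by
                  intro h
                  exact hasym u₂.1 u₁.1 h21 (h ▸ hu₁w₀)
                have hu₂w₀ : A u₂.1 w₀.1 := hu₂ w₀ ((memN w₀).2 hw₀v) hw₀ne
                exact hasym v u₁.1 hvu₁
                  (hto u₂.1 u₁.1 w₀.1 v h21 hu₂w₀ hu₂v hu₁w₀ hw₀v)
            exact caseC u₂ hu₂s hu₂ hb2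
        · by_cases hNne : sN.Nonempty
          · obtain ⟨u₂, hu₂s, hu₂⟩ := sourceN hNne
            exact caseC u₂ hu₂s hu₂
              (fun x hx => absurd ⟨x, (memP x).2 hx⟩ hPne)
          · exact ⟨0, fun x hx => absurd ⟨x, (memP x).2 hx⟩ hPne,
              fun x hx => absurd ⟨x, (memN x).2 hx⟩ hNne⟩
      obtain ⟨c, hPc, hNc⟩ := hkeyc
      obtain ⟨p, hp⟩ := insertion' θ' (fun x => A v x.1) (fun x => A x.1 v) c hPc hNc
      refine ⟨fun u => if h : u = v then p else θ' ⟨u, h⟩, ?_, ?_⟩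
      · intro a b hab
        by_cases ha : a = v <;> by_cases hb' : b = v
        · subst ha; subst hb'; exact absurd hab (hasym _ _ hab)
        · subst ha
          simp only [dif_pos, dif_neg hb']
          exact (hp ⟨b, hb'⟩).1 hab
        · subst hb'
          simp only [dif_pos, dif_neg ha]
          have h2 := ((hp ⟨a, ha⟩).2.1) hab
          have h0 : Int.fract (θ' ⟨a, ha⟩ - p) ≠ 0 := by
            intro hh; rw [hh] at h2; norm_num at h2
          have h3 := Int.fract_neg h0
          rw [neg_sub] at h3
          rw [h3]
          constructor <;> [linarith [h2.2]; linarith [h2.1]]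
        · simp only [dif_neg ha, dif_neg hb']
          exact hrep ⟨a, ha⟩ ⟨b, hb'⟩ hab
      · intro a b hab
        by_cases ha : a = v <;> by_cases hb' : b = v
        · subst ha; subst hb'; exact absurd rfl hab
        · subst ha
          simp only [dif_pos, dif_neg hb']
          exact (hp ⟨b, hb'⟩).2.2
        · subst hb'
          simp only [dif_pos, dif_neg ha]
          have h2 := (hp ⟨a, ha⟩).2.2
          have h3 := Int.fract_neg h2.1
          rw [neg_sub] at h3
          rw [h3]
          have h4 := Int.fract_lt_one (θ' ⟨a, ha⟩ - p)
          constructor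
          · intro hh; linarith [hh]
          · intro hh
            exact h2.2 (by linarith)
        · simp only [dif_neg ha, dif_neg hb']
          exact hgen ⟨a, ha⟩ ⟨b, hb'⟩ (fun h => hab (congrArg Subtype.val h))

end StmtFourteenProof

/-- A friendly partially oriented complete graph (arc set
`A`, underlying graph the complete graph `⊤`) can be completed to a locally
transitive tournament iff no directed triangle of its arcs is contained in the
in-neighbourhood or the out-neighbourhood of any vertex. -/
theorem stmt_14 {V : Type*} [Fintype V] (A : V → V → Prop)
    (hA : IsOrientedGraph A)
    (hcons : Consentaneous (⊤ : SimpleGraph V) A)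
    (hnbt : NoBadTriple (⊤ : SimpleGraph V) A) :
    (∃ T : V → V → Prop, CompletesToTournament A T ∧ IsLocallyTransitive T) ↔
    ¬ ∃ v x y z : V, A x y ∧ A y z ∧ A z x ∧
        ((A v x ∧ A v y ∧ A v z) ∨ (A x v ∧ A y v ∧ A z v)) := by
  constructor
  · rintro ⟨T, ⟨hext, hnorev, hTour⟩, hlt⟩ ⟨v, x, y, z, hxy, hyz, hzx, hcase⟩
    rcases hcase with ⟨h1, h2, h3⟩ | ⟨h1, h2, h3⟩
    · exact hTour.1 x z
        (hlt.1 v x y z (hext v x h1) (hext v y h2) (hext v z h3)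
          (hext x y hxy) (hext y z hyz)) (hext z x hzx)
    · exact hTour.1 x z
        (hlt.2 v x y z (hext x v h1) (hext y v h2) (hext z v h3)
          (hext x y hxy) (hext y z hyz)) (hext z x hzx)
  · intro hrhs
    have hclq : ∀ u m w : V, u ≠ w → (A u m ∨ A m u) → (A m w ∨ A w m) →
        (A u w ∨ A w u) := by
      intro u m w huw h1 h2
      by_contra hno
      have hum : u ≠ m := by
        rintro rfl
        rcases h1 with h | h <;> exact hA _ _ h h
      have hmw : m ≠ w := by
        rintro rfl
        rcases h2 with h | h <;> exact hA _ _ h h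
      refine hnbt ⟨u, m, w, (SimpleGraph.top_adj u m).2 hum, (SimpleGraph.top_adj m w).2 hmw,
        (SimpleGraph.top_adj w u).2 (Ne.symm huw), ?_, ?_, ?_,
        Or.inl ⟨h1, h2, fun h => hno (h.elim Or.inr Or.inl)⟩⟩
      · intro hr
        rcases aux_reach' hr with heq | ⟨e1, e2⟩
        · exact hum (congrArg (fun t : EdgePair (⊤ : SimpleGraph V) => t.1.1) heq)
        · exact huw e1
      · intro hr
        rcases aux_reach' hr with heq | ⟨e1, e2⟩
        · exact hmw (congrArg (fun t : EdgePair (⊤ : SimpleGraph V) => t.1.1) heq)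
        · exact hum e1.symm
      · intro hr
        rcases aux_reach' hr with heq | ⟨e1, e2⟩
        · exact huw (congrArg (fun t : EdgePair (⊤ : SimpleGraph V) => t.1.1) heq)
        · exact hmw e2
    have hto : ∀ v x y z : V, A v x → A v y → A v z → A x y → A y z → A x z := by
      intro p x y z h1 h2 h3 hxy hyz
      have hxz : x ≠ z := by
        rintro rfl
        exact hA x y hxy hyz
      rcases hclq x p z hxz (Or.inr h1) (Or.inl h3) with h | h
      · exact h
      · exact absurd ⟨p, x, y, z, hxy, hyz, h, Or.inl ⟨h1, h2, h3⟩⟩ hrhs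
    have hti : ∀ v x y z : V, A x v → A y v → A z v → A x y → A y z → A x z := by
      intro p x y z h1 h2 h3 hxy hyz
      have hxz : x ≠ z := by
        rintro rfl
        exact hA x y hxy hyz
      rcases hclq x p z hxz (Or.inl h1) (Or.inr h3) with h | h
      · exact h
      · exact absurd ⟨p, x, y, z, hxy, hyz, h, Or.inr ⟨h1, h2, h3⟩⟩ hrhs
    obtain ⟨θ, hrep, hgen⟩ := main_rep (Fintype.card V) V A le_rfl ⟨hA, hclq, hto, hti⟩
    have hflip : ∀ a b : V, a ≠ b →
        Int.fract (θ a - θ b) = 1 - Int.fract (θ b - θ a) := by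
      intro a b hab
      have h0 := (hgen a b hab).1
      have h1 := Int.fract_neg h0
      rw [neg_sub] at h1
      exact h1
    refine ⟨fun a b => a ≠ b ∧ 0 < Int.fract (θ b - θ a) ∧ Int.fract (θ b - θ a) < 1/2,
      ⟨?_, ?_, ?_, ?_⟩, ?_, ?_⟩
    · -- A ⊆ T
      intro a b hab
      have hne : a ≠ b := by
        rintro rfl
        exact hA a a hab hab
      exact ⟨hne, hrep a b hab⟩
    · -- no reversal
      rintro a b ⟨hne, h1, h2⟩ hba
      have h3 := hrep b a hba
      rw [hflip a b hne] at h3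
      linarith [h3.2]
    · -- asymmetry
      rintro a b ⟨hne, h1, h2⟩ ⟨hne', h1', h2'⟩
      rw [hflip a b hne] at h2'
      linarith
    · -- totality
      intro a b hne
      rcases lt_trichotomy (Int.fract (θ b - θ a)) (1/2) with h | h | h
      · exact Or.inl ⟨hne, lt_of_le_of_ne (Int.fract_nonneg _) (Ne.symm (hgen a b hne).1), h⟩
      · exact absurd h (hgen a b hne).2
      · refine Or.inr ⟨hne.symm, ?_, ?_⟩ <;> rw [hflip a b hne]
        · linarith [Int.fract_lt_one (θ b - θ a)]
        · linarith
    · -- local transitivity, out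
      rintro p x y z ⟨hpx, hax⟩ ⟨hpy, hay⟩ ⟨hpz, haz⟩ ⟨hxyne, hxy2⟩ ⟨hyzne, hyz2⟩
      rw [show θ y - θ x = (θ y - θ p) - (θ x - θ p) by ring, fract_sub_fract'] at hxy2
      rw [show θ z - θ y = (θ z - θ p) - (θ y - θ p) by ring, fract_sub_fract'] at hyz2
      have hab := half_lt' hax hay hxy2
      have hbc := half_lt' hay haz hyz2
      have hne : x ≠ z := by
        rintro rfl
        exact lt_irrefl _ (hab.trans hbc)
      refine ⟨hne, ?_⟩
      rw [show θ z - θ x = (θ z - θ p) - (θ x - θ p) by ring, fract_sub_fract',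
        Int.fract_eq_self.2 ⟨by linarith, by linarith [haz.2, hax.1]⟩]
      exact ⟨by linarith, by linarith [haz.2, hax.1]⟩
    · -- local transitivity, in
      rintro p x y z ⟨hxp, hax⟩ ⟨hyp, hay⟩ ⟨hzp, haz⟩ ⟨hxyne, hxy2⟩ ⟨hyzne, hyz2⟩
      rw [show θ y - θ x = (θ p - θ x) - (θ p - θ y) by ring, fract_sub_fract'] at hxy2
      rw [show θ z - θ y = (θ p - θ y) - (θ p - θ z) by ring, fract_sub_fract'] at hyz2
      have hba := half_lt' hay hax hxy2
      have hcb := half_lt' haz hay hyz2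
      have hne : x ≠ z := by
        rintro rfl
        exact lt_irrefl _ (hcb.trans hba)
      refine ⟨hne, ?_⟩
      rw [show θ z - θ x = (θ p - θ x) - (θ p - θ z) by ring, fract_sub_fract',
        Int.fract_eq_self.2 ⟨by linarith, by linarith [hax.2, haz.1]⟩]
      exact ⟨by linarith, by linarith [hax.2, haz.1]⟩
end

section
/- In a locally transitive local tournament D whose underlying graph is connected and whose complement restricted to a connected component C_i (of the complement graph) is bipartite with parts S_i and T_i, the set S_i induces a transitive tournament in D, and by symmetry so does T_i. -/
/-- Core step: if `y` is nonadjacent to all vertices of a directed triangle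
`a → b → c → a`, then no vertex adjacent to `y` can be adjacent to `a`. -/
lemma stmt18_core {V : Type*} (A : V → V → Prop)
    (hA : IsLocalTournament A) (hlt : IsLocallyTransitive A)
    {a b c y y' : V} (hab : A a b) (hbc : A b c) (hca : A c a)
    (hya : ¬(A y a ∨ A a y)) (hyb : ¬(A y b ∨ A b y)) (hyc : ¬(A y c ∨ A c y))
    (hyy' : A y y' ∨ A y' y) (hy'a : A y' a ∨ A a y') : False := by
  obtain ⟨hasym, hout, hin⟩ := hA
  obtain ⟨hlo, hli⟩ := hlt
  have hya' : y ≠ a := fun e => hyb (by subst e; exact Or.inl hab)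
  have hyb' : y ≠ b := fun e => hya (by subst e; exact Or.inr hab)
  have hyc' : y ≠ c := fun e => hyb (by subst e; exact Or.inr hbc)
  rcases hy'a with h5 | h5
  · -- `y' → a`
    have hyy : A y y' := by
      rcases hyy' with h | h
      · exact h
      · exact absurd (hout y' y a h h5 hya') hya
    have hy'c : y' ≠ c := fun e => hyc (by subst e; exact Or.inl hyy)
    have h6 : A y' c := by
      rcases hin a y' c h5 hca hy'c with h | h
      · exact h
      · exact absurd (hin y' c y h hyy (Ne.symm hyc')).symm hyc
    have hy'b : y' ≠ b := fun e => hyb (by subst e; exact Or.inl hyy)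
    have h7 : A y' b := by
      rcases hin c y' b h6 hbc hy'b with h | h
      · exact h
      · exact absurd (hin y' b y h hyy (Ne.symm hyb')).symm hyb
    exact hasym c a hca (hlo y' a b c h5 h7 h6 hab hbc)
  · -- `a → y'`
    have hyy : A y' y := by
      rcases hyy' with h | h
      · exact absurd (hin y' y a h h5 hya') hya
      · exact h
    have hy'b : y' ≠ b := fun e => hyb (by subst e; exact Or.inr hyy)
    have h6 : A b y' := by
      rcases hout a y' b h5 hab hy'b with h | h
      · exact absurd (hout y' y b hyy h hyb') hyb
      · exact h
    have hy'c : y' ≠ c := fun e => hyc (by subst e; exact Or.inr hyy)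
    have h7 : A c y' := by
      rcases hout b y' c h6 hbc hy'c with h | h
      · exact absurd (hout y' y c hyy h hyc') hyc
      · exact h
    exact hasym c a hca (hli y' a b c h5 h6 h7 hab hbc)

/-- No vertex can be nonadjacent to all three vertices of a directed triangle,
when the underlying graph is connected. -/
lemma stmt18_noAll {V : Type*} (A : V → V → Prop)
    (hA : IsLocalTournament A) (hlt : IsLocallyTransitive A)
    (hconn : (SimpleGraph.fromRel A).Connected)
    {a b c : V} (hab : A a b) (hbc : A b c) (hca : A c a)
    (y : V) (h1 : ¬(A y a ∨ A a y)) (h2 : ¬(A y b ∨ A b y))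
    (h3 : ¬(A y c ∨ A c y)) : False := by
  obtain ⟨p⟩ := hconn.preconnected y a
  revert h1 h2 h3
  induction p with
  | nil => intro h1 h2 h3; exact h2 (Or.inl hab)
  | cons h q ih =>
    rename_i y y₁ _
    intro h1 h2 h3
    have hyy : A y y₁ ∨ A y₁ y := ((SimpleGraph.fromRel_adj A _ _).mp h).2
    refine ih hab hca ?_ ?_ ?_
    · exact fun hadj => stmt18_core A hA hlt hab hbc hca h1 h2 h3 hyy hadj
    · exact fun hadj => stmt18_core A hA hlt hbc hca hab h2 h3 h1 hyy hadj
    · exact fun hadj => stmt18_core A hA hlt hca hab hbc h3 h1 h2 hyy hadj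

/-- A vertex nonadjacent to `a` in a directed triangle `a → b → c → a` is
sandwiched: `b → z → c`. -/
lemma stmt18_nonadj_tri {V : Type*} (A : V → V → Prop)
    (hA : IsLocalTournament A) (hlt : IsLocallyTransitive A)
    (hconn : (SimpleGraph.fromRel A).Connected)
    {a b c z : V} (hab : A a b) (hbc : A b c) (hca : A c a)
    (hzne : z ≠ a) (hza : ¬(A z a ∨ A a z)) : A b z ∧ A z c := by
  have hout := hA.2.1
  have hin := hA.2.2
  have hzb : A z b ∨ A b z := by
    by_contra hnb
    have hnc : ¬(A z c ∨ A c z) := by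
      rintro (h | h)
      · have hzb' : z ≠ b := fun e => hza (by subst e; exact Or.inr hab)
        exact hnb (hin c z b h hbc hzb')
      · exact hza (hout c z a h hca hzne)
    exact stmt18_noAll A hA hlt hconn hab hbc hca z hza hnb hnc
  have hbz : A b z := by
    rcases hzb with h | h
    · exact absurd (hin b z a h hab hzne) hza
    · exact h
  have hzc' : A z c := by
    have hzc'' : z ≠ c := fun e => hza (by subst e; exact Or.inl hca)
    rcases hout b z c hbz hbc hzc'' with h | h
    · exact h
    · exact absurd (hout c z a h hca hzne) hza
  exact ⟨hbz, hzc'⟩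

/-- Let `A` be a locally transitive local tournament whose
underlying graph is connected, let `K` be (the vertex set of) a connected
component of the complement of the underlying graph, and let `(S, T)` be a
bipartition of `K` (every complement-edge inside `K` goes between `S` and
`T`).  Then `S` induces a transitive tournament in `A`, and so does `T`. -/
theorem stmt_18 {V : Type*} [Fintype V] (A : V → V → Prop)
    (hA : IsLocalTournament A) (hlt : IsLocallyTransitive A)
    (hconn : (SimpleGraph.fromRel A).Connected)
    (K S T : Set V) (v₀ : V)
    (hK : K = {u | ((SimpleGraph.fromRel A)ᶜ).Reachable v₀ u})
    (hcover : S ∪ T = K) (hdisj : Disjoint S T)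
    (hbip : ∀ u ∈ K, ∀ w ∈ K, ((SimpleGraph.fromRel A)ᶜ).Adj u w →
      ((u ∈ S ∧ w ∈ T) ∨ (u ∈ T ∧ w ∈ S))) :
    ((∀ u ∈ S, ∀ w ∈ S, u ≠ w → A u w ∨ A w u) ∧
     (∀ u ∈ S, ∀ w ∈ S, ∀ x ∈ S, A u w → A w x → A u x)) ∧
    ((∀ u ∈ T, ∀ w ∈ T, u ≠ w → A u w ∨ A w u) ∧
     (∀ u ∈ T, ∀ w ∈ T, ∀ x ∈ T, A u w → A w x → A u x)) := by
  classical
  have hcadj : ∀ u v : V, ((SimpleGraph.fromRel A)ᶜ).Adj u v ↔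
      u ≠ v ∧ ¬(A u v ∨ A v u) := by
    intro u v
    rw [SimpleGraph.compl_adj, SimpleGraph.fromRel_adj]
    tauto
  have memK : ∀ z : V, z ∈ K ↔ ((SimpleGraph.fromRel A)ᶜ).Reachable v₀ z := by
    intro z; rw [hK]; exact Iff.rfl
  have hSK : S ⊆ K := by rw [← hcover]; exact Set.subset_union_left
  have hTK : T ⊆ K := by rw [← hcover]; exact Set.subset_union_right
  have adjS : ∀ p ∈ S, ∀ q ∈ S, p ≠ q → A p q ∨ A q p := by
    intro p hp q hq hne
    by_contra hno
    rcases hbip p (hSK hp) q (hSK hq) ((hcadj p q).mpr ⟨hne, hno⟩) with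
      ⟨_, hqT⟩ | ⟨hpT, _⟩
    · exact (Set.disjoint_left.mp hdisj hq) hqT
    · exact (Set.disjoint_left.mp hdisj hp) hpT
  have adjT : ∀ p ∈ T, ∀ q ∈ T, p ≠ q → A p q ∨ A q p := by
    intro p hp q hq hne
    by_contra hno
    rcases hbip p (hTK hp) q (hTK hq) ((hcadj p q).mpr ⟨hne, hno⟩) with
      ⟨hpS, _⟩ | ⟨_, hqS⟩
    · exact (Set.disjoint_left.mp hdisj hpS) hp
    · exact (Set.disjoint_left.mp hdisj hqS) hq
  have colorS : ∀ p q, p ∈ K → q ∈ K → ((SimpleGraph.fromRel A)ᶜ).Adj p q →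
      (p ∈ S ↔ q ∉ S) := by
    intro p q hp hq h
    rcases hbip p hp q hq h with ⟨hpS, hqT⟩ | ⟨hpT, hqS⟩
    · exact ⟨fun _ hqS' => Set.disjoint_left.mp hdisj hqS' hqT, fun _ => hpS⟩
    · exact ⟨fun hpS' => (Set.disjoint_left.mp hdisj hpS' hpT).elim,
        fun hq' => (hq' hqS).elim⟩
  have colorT : ∀ p q, p ∈ K → q ∈ K → ((SimpleGraph.fromRel A)ᶜ).Adj p q →
      (p ∈ T ↔ q ∉ T) := by
    intro p q hp hq h
    rcases hbip p hp q hq h with ⟨hpS, hqT⟩ | ⟨hpT, hqS⟩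
    · exact ⟨fun hpT' => (Set.disjoint_left.mp hdisj hpS hpT').elim,
        fun hq' => (hq' hqT).elim⟩
    · exact ⟨fun _ hqT' => Set.disjoint_left.mp hdisj hqS hqT', fun _ => hpT⟩
  have main : ∀ S' : Set V, S' ⊆ K →
      (∀ p ∈ S', ∀ q ∈ S', p ≠ q → A p q ∨ A q p) →
      (∀ p q, p ∈ K → q ∈ K → ((SimpleGraph.fromRel A)ᶜ).Adj p q →
        (p ∈ S' ↔ q ∉ S')) →
      ∀ u ∈ S', ∀ w ∈ S', ∀ x ∈ S', A u w → A w x → A u x := by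
    intro S' hsub hpair hcolor u hu w hw x hx huw hwx
    by_contra hnux
    rcases eq_or_ne u x with e | hne_ux
    · subst e; exact hA.1 u w huw hwx
    have hxu : A x u := (hpair u hu x hx hne_ux).resolve_left hnux
    obtain ⟨p⟩ : ((SimpleGraph.fromRel A)ᶜ).Reachable u w :=
      ((memK u).mp (hsub hu)).symm.trans ((memK w).mp (hsub hw))
    have key : ∀ n : ℕ, ∀ u' : V, u' ∈ S' → A u' w → A x u' →
        ∀ q : ((SimpleGraph.fromRel A)ᶜ).Walk u' w, q.length = n → False := by
      intro n
      induction n using Nat.strong_induction_on with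
      | _ n ih =>
        intro u' hu' h1 h2 q hlen
        cases q with
        | nil => exact hA.1 _ _ h1 h1
        | cons hadj q1 =>
          rename_i p₁
          obtain ⟨hne1, hnadj1⟩ := (hcadj u' p₁).mp hadj
          obtain ⟨hwp₁, hp₁x⟩ := stmt18_nonadj_tri A hA hlt hconn h1 hwx h2
            (Ne.symm hne1) (fun h => hnadj1 h.symm)
          cases q1 with
          | nil => exact hA.1 _ _ hwp₁ hwp₁
          | cons hadj2 q2 =>
            rename_i p₂
            obtain ⟨hne2, hnadj2⟩ := (hcadj p₁ p₂).mp hadj2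
            have hu'K : u' ∈ K := hsub hu'
            have hp₁K : p₁ ∈ K :=
              (memK p₁).mpr (((memK u').mp hu'K).trans hadj.reachable)
            have hp₂K : p₂ ∈ K :=
              (memK p₂).mpr (((memK p₁).mp hp₁K).trans hadj2.reachable)
            have hp₁S : p₁ ∉ S' := (hcolor u' p₁ hu'K hp₁K hadj).mp hu'
            have hp₂S : p₂ ∈ S' := by
              by_contra hc
              exact hp₁S ((hcolor p₁ p₂ hp₁K hp₂K hadj2).mpr hc)
            have hp₂w : p₂ ≠ w := fun e => hnadj2 (Or.inr (by rw [e]; exact hwp₁))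
            have hp₂x : p₂ ≠ x := fun e => hnadj2 (Or.inl (by rw [e]; exact hp₁x))
            have h1' : A p₂ w := by
              rcases hpair p₂ hp₂S w hw hp₂w with h | h
              · exact h
              · exact absurd (hA.2.1 w p₁ p₂ hwp₁ h hne2) hnadj2
            have h2' : A x p₂ := by
              rcases hpair p₂ hp₂S x hx hp₂x with h | h
              · exact absurd (hA.2.2 x p₁ p₂ hp₁x h hne2) hnadj2
              · exact h
            have hlen2 : q2.length < n := by
              simp [SimpleGraph.Walk.length_cons] at hlen
              omega
            exact ih q2.length hlen2 p₂ hp₂S h1' h2' q2 rfl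
    exact key p.length u hu huw hxu p rfl
  exact ⟨⟨adjS, main S hSK adjS colorS⟩, ⟨adjT, main T hTK adjT colorT⟩⟩
end
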